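/- arXiv:2405.07914 — 5 statements merged into one kernel-verified Lean document; each statement's English description precedes it below -/
import Mathlib

section
/- Let G be a chordal graph with a clique tree T rooted at a maximal clique C_r. Let C be a node of T with children C_1,...,C_ℓ. Then the edge sets of the induced subgraphs G[V(T_{C_1}) \ sep(C_1)], ..., G[V(T_{C_ℓ}) \ sep(C_ℓ)] are pairwise disjoint, where T_{C_i} is the subtree of T rooted at C_i, V(T_{C_i}) is the union of the cliques in it, and sep(C_i) = C_i ∩ C. -/
open Finset

/-- A graph is chordal if every cycle of length at least 4 has a chord: an edge
of the graph between two vertices of the cycle that is not an edge of the cycle. -/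
def IsChordal {V : Type*} (G : SimpleGraph V) : Prop :=
  ∀ (v : V) (w : G.Walk v v), w.IsCycle → 4 ≤ w.length →
    ∃ a b, a ∈ w.support ∧ b ∈ w.support ∧ G.Adj a b ∧ s(a, b) ∉ w.edges

/-- The clique-tree nodes lying in the subtree rooted at `c` (w.r.t. root `r`):
those nodes all of whose walks to the root pass through `c`. -/
def subtreeNodes {ι : Type*} (T : SimpleGraph ι) (r c : ι) : Set ι :=
  {i | ∀ w : T.Walk i r, c ∈ w.support}

/-- `c` is a child of `p` in the tree `T` rooted at `r`. -/
def IsChild {ι : Type*} (T : SimpleGraph ι) (r p c : ι) : Prop :=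
  T.Adj p c ∧ ∀ w : T.Walk c r, p ∈ w.support

/-- `V[T_c]`: the union of the cliques indexed by the subtree rooted at `c`. -/
def subtreeVerts {V ι : Type*} (T : SimpleGraph ι) (r c : ι) (C : ι → Finset V) : Set V :=
  {x | ∃ i ∈ subtreeNodes T r c, x ∈ C i}

open SimpleGraph in
private lemma mem_takeUntil_of_not_mem_dropUntil' {ι : Type*} {T : SimpleGraph ι} [DecidableEq ι]
    {a b x y : ι} (P : T.Walk a b) (hx : x ∈ P.support) (hy : y ∈ P.support)
    (h : y ∉ (P.dropUntil x hx).support) : y ∈ (P.takeUntil x hx).support := by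
  have hy' := hy
  rw [← Walk.take_spec P hx, Walk.mem_support_append_iff] at hy'
  exact hy'.resolve_right h

open SimpleGraph in
private lemma end_not_mem_takeUntil' {ι : Type*} {T : SimpleGraph ι} [DecidableEq ι]
    {a b x : ι} {P : T.Walk a b} (hP : P.IsPath) (hx : x ∈ P.support) (hxb : x ≠ b) :
    b ∉ (P.takeUntil x hx).support := by
  intro hb
  have hnd := hP.support_nodup
  rw [← Walk.take_spec P hx, Walk.support_append, List.nodup_append] at hnd
  have hbt : b ∈ ((P.dropUntil x hx).support).tail := by
    have hend := Walk.end_mem_support (P.dropUntil x hx)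
    rw [Walk.support_eq_cons] at hend
    rcases List.mem_cons.mp hend with h'|h'
    · exact absurd h'.symm hxb
    · exact h'
  exact hnd.2.2 _ hb _ hbt rfl

open SimpleGraph in
private lemma child_not_mem_path' {ι : Type*} {T : SimpleGraph ι} {r p c : ι}
    (h : IsChild T r p c) {P : T.Walk p r} (hP : P.IsPath) : c ∉ P.support := by
  classical
  intro hc
  have hcp : c ≠ p := fun e => T.irrefl (e ▸ h.1)
  have hpD : p ∈ (P.dropUntil c hc).support := h.2 _
  have hnd := hP.support_nodup
  rw [← Walk.take_spec P hc, Walk.support_append, List.nodup_append] at hnd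
  have hpt : p ∈ (P.takeUntil c hc).support := Walk.start_mem_support _
  have hptl : p ∈ ((P.dropUntil c hc).support).tail := by
    rw [Walk.support_eq_cons] at hpD
    rcases List.mem_cons.mp hpD with h'|h'
    · exact absurd h'.symm hcp
    · exact h'
  exact hnd.2.2 _ hpt _ hptl rfl

open SimpleGraph in
private lemma parent_mem_walk' {ι : Type*} {T : SimpleGraph ι} (hT : T.IsTree) {p c₁ c₂ : ι}
    (h1 : T.Adj p c₁) (h2 : T.Adj p c₂) (hne : c₁ ≠ c₂) (W : T.Walk c₁ c₂) :
    p ∈ W.support := by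
  classical
  have hE : (Walk.cons h1.symm (Walk.cons h2 Walk.nil) : T.Walk c₁ c₂).IsPath := by
    simp [Walk.isPath_def, h1.ne', h2.ne, hne, h1.ne]
  have heq := (hT.existsUnique_path c₁ c₂).unique W.toPath.2 hE
  have hp : p ∈ (W.toPath : T.Walk c₁ c₂).support := by rw [heq]; simp
  exact W.support_toPath_subset hp

open SimpleGraph in
private lemma not_both_children_on_path' {ι : Type*} {T : SimpleGraph ι} (hT : T.IsTree)
    {r p c₁ c₂ j : ι}
    (h1 : IsChild T r p c₁) (h2 : IsChild T r p c₂) (hne : c₁ ≠ c₂)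
    {Q : T.Walk j r} (hQ : Q.IsPath) (hm1 : c₁ ∈ Q.support) (hm2 : c₂ ∈ Q.support) : False := by
  classical
  have hp : p ∈ Q.support :=
    Q.support_dropUntil_subset hm1 (h1.2 (Q.dropUntil c₁ hm1))
  have hD : (Q.dropUntil p hp).IsPath := hQ.dropUntil hp
  have hA : (Q.takeUntil p hp).IsPath := hQ.takeUntil hp
  have hc1A : c₁ ∈ (Q.takeUntil p hp).support :=
    mem_takeUntil_of_not_mem_dropUntil' Q hp hm1 (child_not_mem_path' h1 hD)
  have hc2A : c₂ ∈ (Q.takeUntil p hp).support :=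
    mem_takeUntil_of_not_mem_dropUntil' Q hp hm2 (child_not_mem_path' h2 hD)
  set A := Q.takeUntil p hp with hAdef
  by_cases hc2d : c₂ ∈ (A.dropUntil c₁ hc1A).support
  · have hE : (Walk.cons h1.1.symm Walk.nil : T.Walk c₁ p).IsPath := by
      simp [Walk.isPath_def, h1.1.ne']
    have heq := (hT.existsUnique_path c₁ p).unique (hA.dropUntil hc1A) hE
    rw [heq] at hc2d
    simp only [Walk.support_cons, Walk.support_nil, List.mem_cons, List.not_mem_nil, or_false] at hc2d
    rcases hc2d with h'|h'
    · exact hne h'.symm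
    · exact h2.1.ne h'.symm
  · have hc2t : c₂ ∈ (A.takeUntil c₁ hc1A).support :=
      mem_takeUntil_of_not_mem_dropUntil' A hc1A hc2A hc2d
    have hpW : p ∈ ((A.takeUntil c₁ hc1A).dropUntil c₂ hc2t).support :=
      parent_mem_walk' hT h2.1 h1.1 hne.symm _
    have hpnot : p ∉ (A.takeUntil c₁ hc1A).support :=
      end_not_mem_takeUntil' hA hc1A h1.1.ne'
    exact hpnot ((A.takeUntil c₁ hc1A).support_dropUntil_subset hc2t hpW)

/-- for a chordal graph `G` with a rooted clique tree, and distinct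
children `c₁ ≠ c₂` of a node `p`, the edge sets of the induced subgraphs
`G[V(T_{c₁}) \ sep(c₁)]` and `G[V(T_{c₂}) \ sep(c₂)]` are disjoint, where
`sep(cᵢ) = C cᵢ ∩ C p`. -/
theorem clique_tree_subtrees_edge_disjoint {V ι : Type*} [DecidableEq V]
    (G : SimpleGraph V) (hchordal : IsChordal G)
    (T : SimpleGraph ι) (hT : T.IsTree) (r : ι)
    (C : ι → Finset V)
    (hclique : ∀ i, G.IsClique (C i : Set V))
    (hmax : ∀ i, ∀ S : Finset V, G.IsClique (S : Set V) → C i ⊆ S → S = C i)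
    (hedge : ∀ u v, G.Adj u v → ∃ i, u ∈ C i ∧ v ∈ C i)
    (hsubtree : ∀ (x : V) (i j : ι), x ∈ C i → x ∈ C j →
      ∃ w : T.Walk i j, ∀ m ∈ w.support, x ∈ C m)
    (p c₁ c₂ : ι) (h1 : IsChild T r p c₁) (h2 : IsChild T r p c₂) (hne : c₁ ≠ c₂)
    (u v : V) (huv : G.Adj u v)
    (hu1 : u ∈ subtreeVerts T r c₁ C \ ((C c₁ ∩ C p : Finset V) : Set V))
    (hv1 : v ∈ subtreeVerts T r c₁ C \ ((C c₁ ∩ C p : Finset V) : Set V))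
    (hu2 : u ∈ subtreeVerts T r c₂ C \ ((C c₂ ∩ C p : Finset V) : Set V))
    (hv2 : v ∈ subtreeVerts T r c₂ C \ ((C c₂ ∩ C p : Finset V) : Set V)) :
    False := by
    classical
  obtain ⟨hu1s, hu1n⟩ := hu1
  obtain ⟨hu2s, hu2n⟩ := hu2
  obtain ⟨i, hi, hui⟩ := hu1s
  obtain ⟨j, hj, huj⟩ := hu2s
  obtain ⟨w, hw⟩ := hsubtree u i j hui huj
  obtain ⟨Q, hQ, -⟩ := hT.existsUnique_path j r
  obtain ⟨P, hP, -⟩ := hT.existsUnique_path i r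
  have hc2Q : c₂ ∈ Q.support := hj Q
  have hc1P : c₁ ∈ P.support := hi P
  have hc1w : c₁ ∈ w.support := by
    have h := hi (w.append Q)
    rw [SimpleGraph.Walk.mem_support_append_iff] at h
    exact h.resolve_right fun hq =>
      not_both_children_on_path' hT h1 h2 hne hQ hq hc2Q
  have hc2w : c₂ ∈ w.support := by
    have h := hj (w.reverse.append P)
    rw [SimpleGraph.Walk.mem_support_append_iff, SimpleGraph.Walk.support_reverse,
      List.mem_reverse] at h
    exact h.resolve_right fun hq =>
      not_both_children_on_path' hT h1 h2 hne hP hc1P hq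
  have hpw : p ∈ w.support := by
    by_cases hcase : c₂ ∈ (w.dropUntil c₁ hc1w).support
    · have hW := parent_mem_walk' hT h1.1 h2.1 hne ((w.dropUntil c₁ hc1w).takeUntil c₂ hcase)
      exact w.support_dropUntil_subset hc1w
        ((w.dropUntil c₁ hc1w).support_takeUntil_subset hcase hW)
    · have hc2t : c₂ ∈ (w.takeUntil c₁ hc1w).support :=
        mem_takeUntil_of_not_mem_dropUntil' w hc1w hc2w hcase
      have hW := parent_mem_walk' hT h2.1 h1.1 hne.symm
        ((w.takeUntil c₁ hc1w).dropUntil c₂ hc2t)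
      exact w.support_takeUntil_subset hc1w
        ((w.takeUntil c₁ hc1w).support_dropUntil_subset hc2t hW)
  exact hu1n (by simp [hw c₁ hc1w, hw p hpw])
end

section
/- Let G be a chordal graph admitting an acyclic orientation with maximum indegree ≤ d, and let T be a rooted clique tree of G. Let C be a non-leaf node of T with children C_1,...,C_ℓ, let O_C be an acyclic orientation of lnk(C) = E(C, V[T_C]) with indegree ≤ d, and let O_{sep(C_i)} be O_C restricted to E(sep(C_i), V[T_{C_i}]). Then there is a bijection between the set AO_d(T_C, O_C) of acyclic orientations of G[V[T_C]] with indegree ≤ d consistent with O_C, and the product AO_d(T_{C_1}, O_{sep(C_1)}) × ... × AO_d(T_{C_ℓ}, O_{sep(C_ℓ)}). -/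
open Finset

/-- `D` is an orientation of the symmetric edge relation `R`:
`D` only orients edges of `R`, and every edge of `R` gets exactly one direction. -/
def Orients {V : Type*} (R D : V → V → Prop) : Prop :=
  (∀ u v, D u v → R u v) ∧ (∀ u v, R u v → (D u v ↔ ¬ D v u))

/-- The directed relation `D` is acyclic (no directed cycle). -/
def AcyclicRel {V : Type*} (D : V → V → Prop) : Prop :=
  ∀ v, ¬ Relation.TransGen D v v

/-- Every vertex has at most `d` incoming edges under `D`. -/
def IndegLE {V : Type*} (D : V → V → Prop) (d : ℕ) : Prop :=
  ∀ v, Set.ncard {u | D u v} ≤ d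

/-- Edge relation of the induced subgraph `G[S]`. -/
def inducedRel {V : Type*} (G : SimpleGraph V) (S : Set V) : V → V → Prop :=
  fun u v => G.Adj u v ∧ u ∈ S ∧ v ∈ S

/-- Edge relation `E(A, B)`: edges of `G` with one endpoint in `A` and the other in `B`. -/
def linkRel {V : Type*} (G : SimpleGraph V) (A B : Set V) : V → V → Prop :=
  fun u v => G.Adj u v ∧ ((u ∈ A ∧ v ∈ B) ∨ (v ∈ A ∧ u ∈ B))

/-- `AO G d R F O`: acyclic orientations of the edge relation `R` with indegree at
most `d` that are consistent (on `R ∩ F`) with the fixed orientation `O` of `F`. -/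
def AO {V : Type*} (d : ℕ) (R F O : V → V → Prop) : Set (V → V → Prop) :=
  {D | Orients R D ∧ AcyclicRel D ∧ IndegLE D d ∧
    ∀ u v, R u v → F u v → (D u v ↔ O u v)}

section TreeLemmas

open SimpleGraph Walk

variable {ι : Type*} {T : SimpleGraph ι} [DecidableEq ι] {r p q q1 q2 k m : ι}

theorem COB_mem_subtree_self : p ∈ subtreeNodes T r p := fun w => w.start_mem_support

theorem COB_child_not_mem_path (hc : IsChild T r p q) (w : T.Walk p r) (hw : w.IsPath) :
    q ∉ w.support := by
  intro hq
  have hpd : p ∈ (w.dropUntil q hq).support := hc.2 _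
  have hqp : q ≠ p := hc.1.ne'
  have hsupp : w.support = (w.takeUntil q hq).support ++ (w.dropUntil q hq).support.tail := by
    conv_lhs => rw [← w.take_spec hq]
    exact Walk.support_append _ _
  have hnd := hw.support_nodup
  rw [hsupp] at hnd
  have hdisj := List.disjoint_of_nodup_append hnd
  have hp1 : p ∈ (w.takeUntil q hq).support := Walk.start_mem_support _
  have : p ∈ (w.dropUntil q hq).support.tail := by
    have h2 := (w.dropUntil q hq).support_eq_cons
    rw [h2] at hpd
    rcases List.mem_cons.mp hpd with h | h
    · exact absurd h.symm hqp
    · exact h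
  exact hdisj hp1 this

theorem COB_notMem_subtree_child (hT : T.IsTree) (hc : IsChild T r p q) :
    p ∉ subtreeNodes T r q := by
  obtain ⟨w, hw, -⟩ := hT.existsUnique_path p r
  intro h
  exact COB_child_not_mem_path hc w hw (h w)

theorem COB_subtree_child_subset (hc : IsChild T r p q) :
    subtreeNodes T r q ⊆ subtreeNodes T r p := by
  intro m hm w
  have hq : q ∈ w.support := hm w
  exact (w.support_dropUntil_subset hq) (hc.2 (w.dropUntil q hq))

theorem COB_takeUntil_start_length {a b : ι} (w : T.Walk a b) (h : a ∈ w.support) :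
    (w.takeUntil a h).length = 0 := by
  cases w <;> simp [Walk.takeUntil]

theorem COB_takeUntil_cons_ne {u c d x : ι} (r : T.Adj u c) (q : T.Walk c d) (hux : u ≠ x)
    (hx : x ∈ (Walk.cons r q).support) (hx' : x ∈ q.support) :
    (Walk.cons r q).takeUntil x hx = Walk.cons r (q.takeUntil x hx') := by
  simp [Walk.takeUntil, hux]

theorem COB_length_takeUntil_lt {a b x y : ι} (w : T.Walk a b)
    (hx : x ∈ w.support) (hy : y ∈ (w.takeUntil x hx).support) (hyw : y ∈ w.support)
    (hne : y ≠ x) :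
    (w.takeUntil y hyw).length < (w.takeUntil x hx).length := by
  induction w with
  | nil =>
    rename_i u
    have h1 : x = u := by simpa [Walk.mem_support_nil_iff] using hx
    have h2 : y = u := by simpa [Walk.mem_support_nil_iff] using hyw
    exact absurd (h2.trans h1.symm) hne
  | cons r q ih =>
    rename_i u c d
    by_cases huy : u = y
    · subst huy
      rw [COB_takeUntil_start_length]
      have hux : u ≠ x := hne
      have hx' : x ∈ q.support := by
        cases hx with
        | head => exact absurd rfl hux
        | tail _ h => exact h
      rw [COB_takeUntil_cons_ne r q hux hx hx']
      simp
    · have hux : u ≠ x := by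
        rintro rfl
        have h0 : (Walk.cons r q).takeUntil u hx = Walk.nil := by
          simp [Walk.takeUntil]
        rw [h0] at hy
        have : y = u := by simpa [Walk.mem_support_nil_iff] using hy
        exact huy this.symm
      have hx' : x ∈ q.support := by
        cases hx with
        | head => exact absurd rfl hux
        | tail _ h => exact h
      rw [COB_takeUntil_cons_ne r q hux hx hx'] at hy
      have hy' : y ∈ (q.takeUntil x hx').support := by
        cases hy with
        | head => exact absurd rfl huy
        | tail _ h => exact h
      have hyq : y ∈ q.support := q.support_takeUntil_subset hx' hy'
      rw [COB_takeUntil_cons_ne r q huy hyw hyq, COB_takeUntil_cons_ne r q hux hx hx']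
      simpa using ih hx' hy' hyq

theorem COB_children_disjoint (hT : T.IsTree) (hc1 : IsChild T r p q1) (hc2 : IsChild T r p q2)
    (hne : q1 ≠ q2) (h1 : m ∈ subtreeNodes T r q1) (h2 : m ∈ subtreeNodes T r q2) : False := by
  obtain ⟨w, hw, -⟩ := hT.existsUnique_path m r
  obtain ⟨pr, hpr, -⟩ := hT.existsUnique_path p r
  have hq1 : q1 ∈ w.support := h1 w
  have hq2 : q2 ∈ w.support := h2 w
  have key : ∀ (a b : ι), IsChild T r p a → IsChild T r p b → a ≠ b →
      ∀ (ha : a ∈ w.support), b ∈ w.support →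
      m ∈ subtreeNodes T r a → m ∈ subtreeNodes T r b →
      b ∈ (w.takeUntil a ha).support := by
    intro a b hca hcb hab ha _ _ hmb
    have hbw' : b ∈ ((w.takeUntil a ha).append (Walk.cons hca.1.symm pr)).support := hmb _
    rw [Walk.mem_support_append_iff] at hbw'
    rcases hbw' with h | h
    · exact h
    · rw [Walk.support_cons] at h
      rcases List.mem_cons.mp h with h | h
      · exact absurd h.symm hab
      · exact absurd h (COB_child_not_mem_path hcb pr hpr)
  have k1 := key q1 q2 hc1 hc2 hne hq1 hq2 h1 h2
  have k2 := key q2 q1 hc2 hc1 hne.symm hq2 hq1 h2 h1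
  have l1 := COB_length_takeUntil_lt w hq1 k1 hq2 hne.symm
  have l2 := COB_length_takeUntil_lt w hq2 k2 hq1 hne
  omega

theorem COB_mem_subtree_children (hT : T.IsTree) (hk : k ∈ subtreeNodes T r p) (hkp : k ≠ p) :
    ∃ q, IsChild T r p q ∧ k ∈ subtreeNodes T r q := by
  obtain ⟨w, hw, -⟩ := hT.existsUnique_path k r
  have hp : p ∈ w.support := hk w
  have htake : (w.takeUntil p hp).IsPath := hw.takeUntil hp
  have hrev : (w.takeUntil p hp).reverse.IsPath := htake.reverse
  obtain ⟨q, hadj, w', hdecomp⟩ :=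
    Walk.exists_eq_cons_of_ne (Ne.symm hkp) (w.takeUntil p hp).reverse
  refine ⟨q, ⟨hadj, ?_⟩, ?_⟩
  · intro u
    by_contra hpu
    have hkw : p ∈ ((w'.reverse).append u).support := hk _
    rw [Walk.mem_support_append_iff] at hkw
    rcases hkw with h | h
    · rw [Walk.support_reverse, List.mem_reverse] at h
      have h2 : (w.takeUntil p hp).reverse.support = p :: w'.support := by
        rw [hdecomp, Walk.support_cons]
      have hnd := hrev.support_nodup
      rw [h2] at hnd
      exact (List.nodup_cons.mp hnd).1 h
    · exact hpu h
  · intro u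
    have hu : (u.toPath : T.Walk k r) = w := (hT.existsUnique_path k r).unique u.toPath.2 hw
    have hq : q ∈ w.support := by
      apply w.support_takeUntil_subset hp
      have h3 : q ∈ (w.takeUntil p hp).reverse.support := by
        rw [hdecomp, Walk.support_cons]
        exact List.mem_cons_of_mem _ (Walk.start_mem_support w')
      rwa [Walk.support_reverse, List.mem_reverse] at h3
    have h4 := u.support_toPath_subset
    rw [hu] at h4
    exact h4 hq

theorem COB_sep_clique {V : Type*} {C : ι → Finset V} {v : V} {a : ι}
    (hsubtree : ∀ (x : V) (i j : ι), x ∈ C i → x ∈ C j →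
      ∃ w : T.Walk i j, ∀ n ∈ w.support, x ∈ C n)
    (hk : k ∈ subtreeNodes T r a) (hm : m ∉ subtreeNodes T r a)
    (hvk : v ∈ C k) (hvm : v ∈ C m) : v ∈ C a := by
  simp only [subtreeNodes, Set.mem_setOf_eq, not_forall] at hm
  obtain ⟨w2, hw2⟩ := hm
  obtain ⟨w, hw⟩ := hsubtree v k m hvk hvm
  have ha : a ∈ (w.append w2).support := hk _
  rw [SimpleGraph.Walk.mem_support_append_iff] at ha
  rcases ha with h | h
  · exact hw a h
  · exact absurd h hw2

end TreeLemmas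

/-- for a chordal graph `G` (admitting an acyclic orientation with
indegree `≤ d`) with rooted clique tree `T`, a non-leaf node `p` with children
`c 0, …, c (ℓ-1)`, and an acyclic indegree-`≤ d` orientation `OC` of
`lnk(C p) = E(C p, V[T_p])`, the set of acyclic indegree-`≤ d` orientations of
`G[V[T_p]]` consistent with `OC` is in bijection with the product over the
children of the sets of acyclic indegree-`≤ d` orientations of `G[V[T_{cᵢ}]]`
consistent with `OC` restricted to `E(sep(cᵢ), V[T_{cᵢ}])`, where
`sep(cᵢ) = C cᵢ ∩ C p`. -/
theorem chordal_orientations_bijection {V ι : Type*} [Fintype V] [DecidableEq V]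
    (G : SimpleGraph V) (hchordal : IsChordal G) (d : ℕ)
    (hGorient : ∃ D, Orients G.Adj D ∧ AcyclicRel D ∧ IndegLE D d)
    (T : SimpleGraph ι) (hT : T.IsTree) (r : ι)
    (C : ι → Finset V)
    (hclique : ∀ i, G.IsClique (C i : Set V))
    (hmax : ∀ i, ∀ S : Finset V, G.IsClique (S : Set V) → C i ⊆ S → S = C i)
    (hedge : ∀ u v, G.Adj u v → ∃ i, u ∈ C i ∧ v ∈ C i)
    (hsubtree : ∀ (x : V) (i j : ι), x ∈ C i → x ∈ C j →
      ∃ w : T.Walk i j, ∀ m ∈ w.support, x ∈ C m)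
    (p : ι) (ℓ : ℕ) (hℓ : 0 < ℓ) (c : Fin ℓ → ι)
    (hchild : ∀ i, IsChild T r p (c i)) (hcinj : Function.Injective c)
    (hallchild : ∀ j, IsChild T r p j → ∃ i, c i = j)
    (OC : V → V → Prop)
    (hOC : Orients (linkRel G (C p : Set V) (subtreeVerts T r p C)) OC ∧
      AcyclicRel OC ∧ IndegLE OC d) :
    Nonempty
      ((AO d (inducedRel G (subtreeVerts T r p C))
          (linkRel G (C p : Set V) (subtreeVerts T r p C)) OC) ≃
        ∀ i : Fin ℓ,
          (AO d (inducedRel G (subtreeVerts T r (c i) C))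
            (linkRel G ((C (c i) ∩ C p : Finset V) : Set V) (subtreeVerts T r (c i) C))
            OC)) := by
  haveI : DecidableEq ι := Classical.decEq ι
  obtain ⟨hOCo, hOCa, hOCd⟩ := hOC
  -- vertex-level structural facts
  have f1 : ∀ {x : V}, x ∈ C p → x ∈ subtreeVerts T r p C :=
    fun hx => ⟨p, COB_mem_subtree_self, hx⟩
  have f2 : ∀ (i : Fin ℓ) {x : V}, x ∈ subtreeVerts T r (c i) C →
      x ∈ subtreeVerts T r p C := by
    rintro i x ⟨k, hk, hxk⟩
    exact ⟨k, COB_subtree_child_subset (hchild i) hk, hxk⟩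
  have f3 : ∀ (i : Fin ℓ) {x : V}, x ∈ subtreeVerts T r (c i) C → x ∈ C p → x ∈ C (c i) := by
    rintro i x ⟨k, hk, hxk⟩ hxp
    exact COB_sep_clique hsubtree hk (COB_notMem_subtree_child hT (hchild i)) hxk hxp
  have f5 : ∀ (i j : Fin ℓ), i ≠ j → ∀ {x : V}, x ∈ subtreeVerts T r (c i) C →
      x ∈ subtreeVerts T r (c j) C → x ∈ C p := by
    rintro i j hij x ⟨k, hk, hxk⟩ ⟨m, hm, hxm⟩
    have hmi : m ∉ subtreeNodes T r (c i) := fun hmem =>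
      COB_children_disjoint hT (hchild i) (hchild j) (fun h => hij (hcinj h)) hmem hm
    have hxci : x ∈ C (c i) := COB_sep_clique hsubtree hk hmi hxk hxm
    have hki : k ∉ subtreeNodes T r (c j) := fun hmem =>
      COB_children_disjoint hT (hchild j) (hchild i) (fun h => hij (hcinj h.symm)) hmem hk
    have hxcj : x ∈ C (c j) := COB_sep_clique hsubtree hm hki hxm hxk
    obtain ⟨w, hw⟩ := hsubtree x (c i) (c j) hxci hxcj
    have hcine : c i ≠ c j := fun h => hij (hcinj h)
    have hpi : p ≠ c i := (hchild i).1.ne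
    have hpj : p ≠ c j := (hchild j).1.ne
    have hpath2 : (SimpleGraph.Walk.cons (hchild i).1.symm
        (SimpleGraph.Walk.cons (hchild j).1 SimpleGraph.Walk.nil) : T.Walk (c i) (c j)).IsPath := by
      simp [SimpleGraph.Walk.isPath_def, hcine, hpi.symm, hpj]
    have huniq := (hT.existsUnique_path (c i) (c j)).unique w.toPath.2 hpath2
    have hp : p ∈ w.support := by
      apply w.support_toPath_subset
      rw [huniq]
      simp
    exact hw p hp
  have f7 : ∀ {x : V}, x ∈ subtreeVerts T r p C → x ∉ C p →
      ∃ i, x ∈ subtreeVerts T r (c i) C := by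
    rintro x ⟨k, hk, hxk⟩ hxp
    have hkp : k ≠ p := by rintro rfl; exact hxp hxk
    obtain ⟨q, hq, hkq⟩ := COB_mem_subtree_children hT hk hkp
    obtain ⟨i, rfl⟩ := hallchild q hq
    exact ⟨i, k, hkq, hxk⟩
  have f6 : ∀ {u v : V}, G.Adj u v → u ∈ subtreeVerts T r p C → u ∉ C p →
      ∃ i, u ∈ subtreeVerts T r (c i) C ∧ v ∈ subtreeVerts T r (c i) C := by
    rintro u v hadj ⟨k', hk', huk'⟩ hup
    obtain ⟨k, huk, hvk⟩ := hedge u v hadj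
    have hkp : k ∈ subtreeNodes T r p := by
      by_contra hk
      exact hup (COB_sep_clique hsubtree hk' hk huk' huk)
    have hknp : k ≠ p := by rintro rfl; exact hup huk
    obtain ⟨q, hq, hkq⟩ := COB_mem_subtree_children hT hkp hknp
    obtain ⟨i, rfl⟩ := hallchild q hq
    exact ⟨i, ⟨k, hkq, huk⟩, ⟨k, hkq, hvk⟩⟩
  have g6 : ∀ (i : Fin ℓ) {u v : V}, G.Adj u v → u ∈ subtreeVerts T r p C →
      v ∈ subtreeVerts T r (c i) C → v ∉ C p → u ∈ subtreeVerts T r (c i) C := by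
    intro i u v hadj hu hv hvp
    obtain ⟨j, hvj, huj⟩ := f6 hadj.symm (f2 i hv) hvp
    by_cases hij : j = i
    · subst hij; exact huj
    · exact absurd (f5 j i hij hvj hv) hvp
  -- edge-level facts
  have hFpsymm : ∀ {u v : V}, linkRel G (↑(C p)) (subtreeVerts T r p C) u v →
      linkRel G (↑(C p)) (subtreeVerts T r p C) v u := by
    intro u v h
    exact ⟨h.1.symm, h.2.symm⟩
  have g2 : ∀ (i : Fin ℓ) {u v : V}, inducedRel G (subtreeVerts T r (c i) C) u v →
      inducedRel G (subtreeVerts T r p C) u v := by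
    intro i u v h
    exact ⟨h.1, f2 i h.2.1, f2 i h.2.2⟩
  have g5 : ∀ {u v : V}, linkRel G (↑(C p)) (subtreeVerts T r p C) u v →
      inducedRel G (subtreeVerts T r p C) u v := by
    rintro u v ⟨hadj, ⟨hu, hv⟩ | ⟨hv, hu⟩⟩
    · exact ⟨hadj, f1 hu, hv⟩
    · exact ⟨hadj, hu, f1 hv⟩
  have g3 : ∀ (i : Fin ℓ) {u v : V},
      linkRel G (↑(C (c i) ∩ C p)) (subtreeVerts T r (c i) C) u v →
      linkRel G (↑(C p)) (subtreeVerts T r p C) u v ∧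
        inducedRel G (subtreeVerts T r (c i) C) u v := by
    rintro i u v ⟨hadj, ⟨hu, hv⟩ | ⟨hv, hu⟩⟩ <;>
      rw [Finset.coe_inter, Set.mem_inter_iff] at *
    · have husv : u ∈ subtreeVerts T r (c i) C := ⟨c i, COB_mem_subtree_self, hu.1⟩
      exact ⟨⟨hadj, Or.inl ⟨hu.2, f2 i hv⟩⟩, ⟨hadj, husv, hv⟩⟩
    · have hvsv : v ∈ subtreeVerts T r (c i) C := ⟨c i, COB_mem_subtree_self, hv.1⟩
      exact ⟨⟨hadj, Or.inr ⟨hv.2, f2 i hu⟩⟩, ⟨hadj, hu, hvsv⟩⟩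
  have g4 : ∀ (i : Fin ℓ) {u v : V}, inducedRel G (subtreeVerts T r (c i) C) u v →
      linkRel G (↑(C p)) (subtreeVerts T r p C) u v →
      linkRel G (↑(C (c i) ∩ C p)) (subtreeVerts T r (c i) C) u v := by
    rintro i u v ⟨hadj, hu, hv⟩ ⟨-, ⟨hup, -⟩ | ⟨hvp, -⟩⟩
    · exact ⟨hadj, Or.inl ⟨by rw [Finset.coe_inter]; exact ⟨f3 i hu hup, hup⟩, hv⟩⟩
    · exact ⟨hadj, Or.inr ⟨by rw [Finset.coe_inter]; exact ⟨f3 i hv hvp, hvp⟩, hu⟩⟩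
  have g1 : ∀ {u v : V}, inducedRel G (subtreeVerts T r p C) u v →
      linkRel G (↑(C p)) (subtreeVerts T r p C) u v ∨
        ∃ i, inducedRel G (subtreeVerts T r (c i) C) u v := by
    rintro u v ⟨hadj, hu, hv⟩
    by_cases hup : u ∈ C p
    · exact Or.inl ⟨hadj, Or.inl ⟨hup, hv⟩⟩
    · by_cases hvp : v ∈ C p
      · exact Or.inl ⟨hadj, Or.inr ⟨hvp, hu⟩⟩
      · obtain ⟨i, hui, hvi⟩ := f6 hadj hu hup
        exact Or.inr ⟨i, hadj, hui, hvi⟩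
  -- Claim A
  have claimA : ∀ (i : Fin ℓ) (E : V → V → Prop),
      E ∈ AO d (inducedRel G (subtreeVerts T r (c i) C))
        (linkRel G (↑(C (c i) ∩ C p)) (subtreeVerts T r (c i) C)) OC →
      ∀ a b, a ∈ C p → b ∈ C p → Relation.TransGen E a b → OC a b := by
    intro i E hE a b ha hb htg
    obtain ⟨hEo, hEa, hEd, hEc⟩ := hE
    have endE : ∀ {x y : V}, Relation.TransGen E x y →
        x ∈ subtreeVerts T r (c i) C ∧ y ∈ subtreeVerts T r (c i) C := by
      intro x y h
      induction h with
      | single h => exact ⟨(hEo.1 _ _ h).2.1, (hEo.1 _ _ h).2.2⟩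
      | tail _ h2 ih => exact ⟨ih.1, (hEo.1 _ _ h2).2.2⟩
    have hne : a ≠ b := by rintro rfl; exact hEa a htg
    have hadj : G.Adj a b := hclique p (Finset.mem_coe.mpr ha) (Finset.mem_coe.mpr hb) hne
    have hsv := endE htg
    have hFpba : linkRel G (↑(C p)) (subtreeVerts T r p C) b a :=
      ⟨hadj.symm, Or.inl ⟨hb, f1 ha⟩⟩
    by_contra hOCab
    have hOCba : OC b a := by
      by_contra hOCba
      exact hOCba ((hOCo.2 b a hFpba).mpr (by
        intro h
        exact hOCab h))
    have hRiba : inducedRel G (subtreeVerts T r (c i) C) b a := ⟨hadj.symm, hsv.2, hsv.1⟩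
    have hE' : E b a := (hEc b a hRiba (g4 i hRiba hFpba)).mpr hOCba
    exact hEa a (htg.tail hE')
  -- restriction map is well-defined
  have memRestrict : ∀ (D : V → V → Prop),
      D ∈ AO d (inducedRel G (subtreeVerts T r p C))
        (linkRel G (↑(C p)) (subtreeVerts T r p C)) OC →
      ∀ i : Fin ℓ, (fun u v => D u v ∧ inducedRel G (subtreeVerts T r (c i) C) u v) ∈
        AO d (inducedRel G (subtreeVerts T r (c i) C))
          (linkRel G (↑(C (c i) ∩ C p)) (subtreeVerts T r (c i) C)) OC := by
    intro D hD i
    obtain ⟨hDo, hDa, hDd, hDc⟩ := hD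
    refine ⟨⟨fun u v h => h.2, ?_⟩, ?_, ?_, ?_⟩
    · intro u v hR
      have hRp := g2 i hR
      have hRsymm : inducedRel G (subtreeVerts T r (c i) C) v u := ⟨hR.1.symm, hR.2.2, hR.2.1⟩
      constructor
      · rintro ⟨hD1, -⟩ ⟨hD2, -⟩
        exact ((hDo.2 u v hRp).mp hD1) hD2
      · intro hnot
        refine ⟨?_, hR⟩
        rcases (hDo.2 u v hRp).mpr (fun hD2 => hnot ⟨hD2, hRsymm⟩) with h
        exact h
    · intro v htg
      exact hDa v (Relation.TransGen.mono (p := D) (fun x y h => h.1) v v htg)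
    · intro v
      refine le_trans (Set.ncard_le_ncard ?_ (Set.toFinite _)) (hDd v)
      intro u hu
      exact hu.1
    · intro u v hR hF
      have hc' := hDc u v (g2 i hR) (g3 i hF).1
      constructor
      · rintro ⟨h, -⟩
        exact hc'.mp h
      · intro h
        exact ⟨hc'.mpr h, hR⟩
  -- gluing map is well-defined
  have memGlue : ∀ (E : Fin ℓ → (V → V → Prop)),
      (∀ i, E i ∈ AO d (inducedRel G (subtreeVerts T r (c i) C))
        (linkRel G (↑(C (c i) ∩ C p)) (subtreeVerts T r (c i) C)) OC) →
      (fun u v => (linkRel G (↑(C p)) (subtreeVerts T r p C) u v ∧ OC u v) ∨ ∃ i, E i u v) ∈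
        AO d (inducedRel G (subtreeVerts T r p C))
          (linkRel G (↑(C p)) (subtreeVerts T r p C)) OC := by
    intro E hE
    have hER : ∀ (i : Fin ℓ) (u v : V), E i u v →
        inducedRel G (subtreeVerts T r (c i) C) u v := fun i => (hE i).1.1
    have endE : ∀ (i : Fin ℓ) {x y : V}, Relation.TransGen (E i) x y →
        x ∈ subtreeVerts T r (c i) C ∧ y ∈ subtreeVerts T r (c i) C := by
      intro i x y h
      induction h with
      | single h => exact ⟨(hER i _ _ h).2.1, (hER i _ _ h).2.2⟩
      | tail _ h2 ih => exact ⟨ih.1, (hER i _ _ h2).2.2⟩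
    -- E i agrees with OC on the big link
    have hEOC : ∀ (i : Fin ℓ) (u v : V), E i u v →
        linkRel G (↑(C p)) (subtreeVerts T r p C) u v → OC u v := by
      intro i u v h hF
      exact ((hE i).2.2.2 u v (hER i u v h) (g4 i (hER i u v h) hF)).mp h
    have hOCE : ∀ (i : Fin ℓ) (u v : V), inducedRel G (subtreeVerts T r (c i) C) u v →
        linkRel G (↑(C p)) (subtreeVerts T r p C) u v → OC u v → E i u v := by
      intro i u v hR hF h
      exact ((hE i).2.2.2 u v hR (g4 i hR hF)).mpr h
    -- two different children force membership in C p
    have hCp2 : ∀ {i j : Fin ℓ} {x : V}, i ≠ j → x ∈ subtreeVerts T r (c i) C →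
        x ∈ subtreeVerts T r (c j) C → x ∈ C p := fun h a b => f5 _ _ h a b
    -- antisymmetry of the glued relation
    have hanti : ∀ u v : V,
        ((linkRel G (↑(C p)) (subtreeVerts T r p C) u v ∧ OC u v) ∨ ∃ i, E i u v) →
        ((linkRel G (↑(C p)) (subtreeVerts T r p C) v u ∧ OC v u) ∨ ∃ i, E i v u) → False := by
      rintro u v (⟨hF1, hO1⟩ | ⟨i, hE1⟩) (⟨hF2, hO2⟩ | ⟨j, hE2⟩)
      · exact ((hOCo.2 u v hF1).mp hO1) hO2
      · have hO2 : OC v u := hEOC j v u hE2 (hFpsymm hF1)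
        exact ((hOCo.2 u v hF1).mp hO1) hO2
      · have hO1 : OC u v := hEOC i u v hE1 (hFpsymm hF2)
        exact ((hOCo.2 v u hF2).mp hO2) hO1
      · by_cases hij : i = j
        · subst hij
          have hRi := hER i u v hE1
          exact ((hE i).1.2 u v hRi).mp hE1 hE2
        · have hRi := hER i u v hE1
          have hRj := hER j v u hE2
          have huCp : u ∈ C p := hCp2 hij hRi.2.1 hRj.2.2
          have hvCp : v ∈ C p := hCp2 hij hRi.2.2 hRj.2.1
          have hF : linkRel G (↑(C p)) (subtreeVerts T r p C) u v :=
            ⟨hRi.1, Or.inl ⟨huCp, f2 i hRi.2.2⟩⟩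
          have hO1 : OC u v := hEOC i u v hE1 hF
          have hO2 : OC v u := hEOC j v u hE2 (hFpsymm hF)
          exact ((hOCo.2 u v hF).mp hO1) hO2
    refine ⟨⟨?_, ?_⟩, ?_, ?_, ?_⟩
    · rintro u v (⟨hF, -⟩ | ⟨i, h⟩)
      · exact g5 hF
      · exact g2 i (hER i u v h)
    · intro u v hR
      constructor
      · intro h1 h2
        exact hanti u v h1 h2
      · intro hnot
        rcases g1 hR with hF | ⟨i, hRi⟩
        · rcases (hOCo.2 u v hF) with hiff
          by_cases hOuv : OC u v
          · exact Or.inl ⟨hF, hOuv⟩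
          · have : OC v u := by
              by_contra hOvu
              exact hOuv (hiff.mpr hOvu)
            exact absurd (Or.inl ⟨hFpsymm hF, this⟩) hnot
        · have hRi' : inducedRel G (subtreeVerts T r (c i) C) v u := ⟨hRi.1.symm, hRi.2.2, hRi.2.1⟩
          by_cases hEuv : E i u v
          · exact Or.inr ⟨i, hEuv⟩
          · have : E i v u := by
              by_contra hEvu
              exact (((hE i).1.2 u v hRi).mpr (fun h => hEvu h)) |> fun h => hEuv h
            exact absurd (Or.inr ⟨i, this⟩) hnot
    · -- acyclicity
      intro v htg
      have hMsub : ∀ (u w : V),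
          ((linkRel G (↑(C p)) (subtreeVerts T r p C) u w ∧ OC u w) ∨ ∃ i, E i u w) →
          ((u ∈ C p ∧ w ∈ C p ∧ OC u w) ∨ ∃ i, E i u w) := by
        rintro u w (⟨hF, hO⟩ | h)
        · by_cases huCp : u ∈ C p
          · by_cases hwCp : w ∈ C p
            · exact Or.inl ⟨huCp, hwCp, hO⟩
            · -- w is in some child subtree; the edge is inside that child
              have hwVp : w ∈ subtreeVerts T r p C := by
                rcases hF.2 with ⟨-, h2⟩ | ⟨h2, -⟩
                · exact h2
                · exact absurd h2 hwCp
              obtain ⟨i, hwi⟩ := f7 hwVp hwCp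
              have hui : u ∈ subtreeVerts T r (c i) C := g6 i hF.1 (f1 huCp) hwi hwCp
              exact Or.inr ⟨i, hOCE i u w ⟨hF.1, hui, hwi⟩ hF hO⟩
          · have huVp : u ∈ subtreeVerts T r p C := by
              rcases hF.2 with ⟨h2, -⟩ | ⟨-, h2⟩
              · exact absurd h2 huCp
              · exact h2
            obtain ⟨i, hui⟩ := f7 huVp huCp
            have hwVp : w ∈ subtreeVerts T r p C := by
              rcases hF.2 with ⟨h2, -⟩ | ⟨h2, -⟩
              · exact absurd h2 huCp
              · exact f1 h2
            have hwi : w ∈ subtreeVerts T r (c i) C := g6 i hF.1.symm hwVp hui huCp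
            exact Or.inr ⟨i, hOCE i u w ⟨hF.1, hui, hwi⟩ hF hO⟩
        · exact Or.inr h
      have htgM := Relation.TransGen.mono hMsub v v htg
      -- the invariant
      have hQ : ∀ a b : V,
          Relation.TransGen (fun u w => (u ∈ C p ∧ w ∈ C p ∧ OC u w) ∨ ∃ i, E i u w) a b →
          (∃ i, Relation.TransGen (E i) a b) ∨
          (∃ x y, (x = a ∨ ∃ i, Relation.TransGen (E i) a x) ∧ x ∈ C p ∧
            Relation.TransGen OC x y ∧ y ∈ C p ∧
            (y = b ∨ ∃ j, Relation.TransGen (E j) y b)) ∨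
          (∃ x, (∃ i, Relation.TransGen (E i) a x) ∧ x ∈ C p ∧
            ∃ j, Relation.TransGen (E j) x b) := by
        intro a b h
        induction h with
        | single h =>
          rcases h with ⟨haCp, hbCp, hO⟩ | ⟨i, hEab⟩
          · exact Or.inr (Or.inl ⟨_, _, Or.inl rfl, haCp, Relation.TransGen.single hO, hbCp,
              Or.inl rfl⟩)
          · exact Or.inl ⟨i, Relation.TransGen.single hEab⟩
        | tail h1 h2 ih =>
          rename_i b' c'
          rcases h2 with ⟨hbCp, hcCp, hObc⟩ | ⟨k, hk⟩
          · rcases ih with ⟨i, hEab⟩ | ⟨x, y, hax, hxCp, hOxy, hyCp, hyb⟩ | ⟨x, hax, hxCp, j, hxb⟩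
            · exact Or.inr (Or.inl ⟨b', c', Or.inr ⟨i, hEab⟩, hbCp,
                Relation.TransGen.single hObc, hcCp, Or.inl rfl⟩)
            · rcases hyb with rfl | ⟨j, hEyb⟩
              · exact Or.inr (Or.inl ⟨x, c', hax, hxCp, hOxy.tail hObc, hcCp, Or.inl rfl⟩)
              · have hOyb : OC y b' := claimA j (E j) (hE j) y b' hyCp hbCp hEyb
                exact Or.inr (Or.inl ⟨x, c', hax, hxCp, (hOxy.tail hOyb).tail hObc, hcCp,
                  Or.inl rfl⟩)
            · have hOxb : OC x b' := claimA j (E j) (hE j) x b' hxCp hbCp hxb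
              exact Or.inr (Or.inl ⟨x, c', Or.inr hax, hxCp,
                (Relation.TransGen.single hOxb).tail hObc, hcCp, Or.inl rfl⟩)
          · have hEk : Relation.TransGen (E k) b' c' := Relation.TransGen.single hk
            rcases ih with ⟨i, hEab⟩ | ⟨x, y, hax, hxCp, hOxy, hyCp, hyb⟩ | ⟨x, hax, hxCp, j, hxb⟩
            · by_cases hik : i = k
              · subst hik
                exact Or.inl ⟨i, hEab.tail hk⟩
              · have hbCp : b' ∈ C p := hCp2 hik (endE i hEab).2 (endE k hEk).1
                exact Or.inr (Or.inr ⟨b', ⟨i, hEab⟩, hbCp, k, hEk⟩)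
            · rcases hyb with rfl | ⟨j, hEyb⟩
              · exact Or.inr (Or.inl ⟨x, y, hax, hxCp, hOxy, hyCp, Or.inr ⟨k, hEk⟩⟩)
              · by_cases hjk : j = k
                · subst hjk
                  exact Or.inr (Or.inl ⟨x, y, hax, hxCp, hOxy, hyCp, Or.inr ⟨j, hEyb.tail hk⟩⟩)
                · have hbCp : b' ∈ C p := hCp2 hjk (endE j hEyb).2 (endE k hEk).1
                  have hOyb : OC y b' := claimA j (E j) (hE j) y b' hyCp hbCp hEyb
                  exact Or.inr (Or.inl ⟨x, b', hax, hxCp, hOxy.tail hOyb, hbCp,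
                    Or.inr ⟨k, hEk⟩⟩)
            · by_cases hjk : j = k
              · subst hjk
                exact Or.inr (Or.inr ⟨x, hax, hxCp, j, hxb.tail hk⟩)
              · have hbCp : b' ∈ C p := hCp2 hjk (endE j hxb).2 (endE k hEk).1
                have hOxb : OC x b' := claimA j (E j) (hE j) x b' hxCp hbCp hxb
                exact Or.inr (Or.inl ⟨x, b', Or.inr hax, hxCp, Relation.TransGen.single hOxb,
                  hbCp, Or.inr ⟨k, hEk⟩⟩)
      rcases hQ v v htgM with ⟨i, hEvv⟩ | ⟨x, y, hax, hxCp, hOxy, hyCp, hyb⟩ |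
        ⟨x, ⟨i, hax⟩, hxCp, j, hxb⟩
      · exact (hE i).2.1 v hEvv
      · rcases hax with hx | ⟨i, hEax⟩
        · rcases hyb with hy | ⟨j, hEyb⟩
          · rw [hx, hy] at hOxy
            exact hOCa v hOxy
          · rw [hx] at hOxy hxCp
            have hOyv : OC y v := claimA j (E j) (hE j) y v hyCp hxCp hEyb
            exact hOCa v (hOxy.tail hOyv)
        · rcases hyb with hy | ⟨j, hEyb⟩
          · rw [hy] at hOxy hyCp
            have hOvx : OC v x := claimA i (E i) (hE i) v x hyCp hxCp hEax
            exact hOCa x (hOxy.tail hOvx)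
          · by_cases hij : i = j
            · subst hij
              have hEyx : Relation.TransGen (E i) y x := hEyb.trans hEax
              have hOyx : OC y x := claimA i (E i) (hE i) y x hyCp hxCp hEyx
              exact hOCa x (hOxy.tail hOyx)
            · have hvCp : v ∈ C p := hCp2 (fun h => hij h.symm) (endE j hEyb).2 (endE i hEax).1
              have hOyv : OC y v := claimA j (E j) (hE j) y v hyCp hvCp hEyb
              have hOvx : OC v x := claimA i (E i) (hE i) v x hvCp hxCp hEax
              exact hOCa x ((hOxy.tail hOyv).tail hOvx)
      · by_cases hij : i = j
        · subst hij
          exact (hE i).2.1 v (hax.trans hxb)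
        · have hvCp : v ∈ C p := hCp2 (fun h => hij h.symm) (endE j hxb).2 (endE i hax).1
          have hOvx : OC v x := claimA i (E i) (hE i) v x hvCp hxCp hax
          have hOxv : OC x v := claimA j (E j) (hE j) x v hxCp hvCp hxb
          exact hOCa v ((Relation.TransGen.single hOvx).tail hOxv)
    · -- indegree
      intro v
      by_cases hvCp : v ∈ C p
      · refine le_trans (le_trans (Set.ncard_le_ncard ?_ (Set.toFinite _)) le_rfl) (hOCd v)
        rintro u (⟨-, hO⟩ | ⟨i, hEuv⟩)
        · exact hO
        · have hRi := hER i u v hEuv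
          have hF : linkRel G (↑(C p)) (subtreeVerts T r p C) u v :=
            ⟨hRi.1, Or.inr ⟨hvCp, f2 i hRi.2.1⟩⟩
          exact hEOC i u v hEuv hF
      · by_cases hvVp : v ∈ subtreeVerts T r p C
        · obtain ⟨i, hvi⟩ := f7 hvVp hvCp
          refine le_trans (Set.ncard_le_ncard ?_ (Set.toFinite _)) ((hE i).2.2.1 v)
          rintro u (⟨hF, hO⟩ | ⟨j, hEuv⟩)
          · rcases hF.2 with ⟨huCp, -⟩ | ⟨hvCp', -⟩
            · have hui : u ∈ subtreeVerts T r (c i) C := g6 i hF.1 (f1 huCp) hvi hvCp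
              have hRi : inducedRel G (subtreeVerts T r (c i) C) u v := ⟨hF.1, hui, hvi⟩
              exact hOCE i u v hRi hF hO
            · exact absurd hvCp' hvCp
          · by_cases hij : j = i
            · subst hij; exact hEuv
            · have hRj := hER j u v hEuv
              exact absurd (hCp2 hij hRj.2.2 hvi) hvCp
        · have : {u | ((linkRel G (↑(C p)) (subtreeVerts T r p C) u v ∧ OC u v) ∨
              ∃ i, E i u v)} = ∅ := by
            ext u
            simp only [Set.mem_setOf_eq, Set.mem_empty_iff_false, iff_false]
            rintro (⟨hF, -⟩ | ⟨i, hEuv⟩)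
            · exact hvVp (g5 hF).2.2
            · exact hvVp (f2 i (hER i u v hEuv).2.2)
          rw [this]
          simp
    · -- consistency with OC
      intro u v hR hF
      constructor
      · rintro (⟨-, hO⟩ | ⟨i, hEuv⟩)
        · exact hO
        · exact hEOC i u v hEuv hF
      · intro hO
        exact Or.inl ⟨hF, hO⟩
  -- the two maps are mutually inverse
  have leftInv : ∀ (D : V → V → Prop),
      D ∈ AO d (inducedRel G (subtreeVerts T r p C))
        (linkRel G (↑(C p)) (subtreeVerts T r p C)) OC →
      (fun u v => (linkRel G (↑(C p)) (subtreeVerts T r p C) u v ∧ OC u v) ∨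
        ∃ i, (D u v ∧ inducedRel G (subtreeVerts T r (c i) C) u v)) = D := by
    intro D hD
    obtain ⟨hDo, hDa, hDd, hDc⟩ := hD
    funext u v
    apply propext
    constructor
    · rintro (⟨hF, hO⟩ | ⟨i, hDuv, -⟩)
      · exact (hDc u v (g5 hF) hF).mpr hO
      · exact hDuv
    · intro hDuv
      have hR := hDo.1 u v hDuv
      rcases g1 hR with hF | ⟨i, hRi⟩
      · exact Or.inl ⟨hF, (hDc u v hR hF).mp hDuv⟩
      · exact Or.inr ⟨i, hDuv, hRi⟩
  have rightInv : ∀ (E : Fin ℓ → (V → V → Prop)),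
      (∀ i, E i ∈ AO d (inducedRel G (subtreeVerts T r (c i) C))
        (linkRel G (↑(C (c i) ∩ C p)) (subtreeVerts T r (c i) C)) OC) →
      ∀ i : Fin ℓ,
      (fun u v => ((linkRel G (↑(C p)) (subtreeVerts T r p C) u v ∧ OC u v) ∨
        ∃ j, E j u v) ∧ inducedRel G (subtreeVerts T r (c i) C) u v) = E i := by
    intro E hE i
    have hER : ∀ (j : Fin ℓ) (u v : V), E j u v →
        inducedRel G (subtreeVerts T r (c j) C) u v := fun j => (hE j).1.1
    funext u v
    apply propext
    constructor
    · rintro ⟨(⟨hF, hO⟩ | ⟨j, hEj⟩), hRi⟩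
      · exact ((hE i).2.2.2 u v hRi (g4 i hRi hF)).mpr hO
      · by_cases hij : j = i
        · rw [hij] at hEj; exact hEj
        · have hRj := hER j u v hEj
          have huCp : u ∈ C p := f5 j i hij hRj.2.1 hRi.2.1
          have hF : linkRel G (↑(C p)) (subtreeVerts T r p C) u v :=
            ⟨hRi.1, Or.inl ⟨huCp, f2 i hRi.2.2⟩⟩
          have hO : OC u v := ((hE j).2.2.2 u v hRj (g4 j hRj hF)).mp hEj
          exact ((hE i).2.2.2 u v hRi (g4 i hRi hF)).mpr hO
    · intro hEuv
      exact ⟨Or.inr ⟨i, hEuv⟩, hER i u v hEuv⟩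
  exact ⟨{
    toFun := fun D i => ⟨fun u v => D.1 u v ∧ inducedRel G (subtreeVerts T r (c i) C) u v,
      memRestrict D.1 D.2 i⟩
    invFun := fun E => ⟨fun u v =>
      (linkRel G (↑(C p)) (subtreeVerts T r p C) u v ∧ OC u v) ∨ ∃ i, (E i).1 u v,
      memGlue (fun i => (E i).1) (fun i => (E i).2)⟩
    left_inv := fun D => Subtype.ext (leftInv D.1 D.2)
    right_inv := fun E => funext fun i => Subtype.ext
      (rightInv (fun j => (E j).1) (fun j => (E j).2) i) }⟩
end

section
/- In the merging-of-orientations construction for chordal graphs: let G be chordal with clique tree node C having children C_1,...,C_ℓ, let O_C be an acyclic orientation of lnk(C), and for each i let O_i be an acyclic orientation of G[V[T_{C_i}]] consistent with O_C restricted to E(sep(C_i), V[T_{C_i}]). Then the union orientation O = O_C ∪ O_1 ∪ ... ∪ O_ℓ is acyclic. -/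
open Finset

namespace MergedAux

variable {ι : Type*} {T : SimpleGraph ι}

noncomputable def pa (hT : T.IsTree) (a b : ι) : T.Walk a b :=
  (hT.existsUnique_path a b).choose

lemma pa_isPath (hT : T.IsTree) (a b : ι) : (pa hT a b).IsPath :=
  (hT.existsUnique_path a b).choose_spec.1

lemma pa_unique (hT : T.IsTree) {a b : ι} (w : T.Walk a b) (hw : w.IsPath) :
    w = pa hT a b :=
  (hT.existsUnique_path a b).choose_spec.2 w hw

lemma pa_support_subset (hT : T.IsTree) {a b : ι} (w : T.Walk a b) :
    (pa hT a b).support ⊆ w.support := by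
  classical
  have h := pa_unique hT w.bypass w.bypass_isPath
  intro x hx
  rw [← h] at hx
  exact w.support_bypass_subset hx

lemma mem_subtreeNodes_iff (hT : T.IsTree) (r q k : ι) :
    k ∈ subtreeNodes T r q ↔ q ∈ (pa hT k r).support := by
  constructor
  · intro h; exact h _
  · intro h w; exact pa_support_subset hT w h

lemma pa_rev (hT : T.IsTree) (a b : ι) : pa hT b a = (pa hT a b).reverse :=
  (pa_unique hT _ ((pa_isPath hT a b).reverse)).symm

lemma mem_pa_rev (hT : T.IsTree) {a b q : ι} (h : q ∈ (pa hT a b).support) :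
    q ∈ (pa hT b a).support := by
  rw [pa_rev hT, SimpleGraph.Walk.support_reverse, List.mem_reverse]
  exact h

lemma pa_adj (hT : T.IsTree) {a b : ι} (h : T.Adj a b) :
    pa hT a b = SimpleGraph.Walk.cons h SimpleGraph.Walk.nil :=
  (pa_unique hT _ (by simp [h.ne])).symm

lemma child_not_mem_pa_pr (hT : T.IsTree) (r p z : ι) (hz : IsChild T r p z) :
    z ∉ (pa hT p r).support := by
  classical
  intro hmem
  set w := pa hT p r with hw
  have hdpath : (w.dropUntil z hmem).IsPath := (pa_isPath hT p r).dropUntil hmem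
  have hpmem : p ∈ (w.dropUntil z hmem).support := hz.2 _
  have hsplit : w.support = (w.takeUntil z hmem).support ++ (w.dropUntil z hmem).support.tail := by
    conv_lhs => rw [← SimpleGraph.Walk.take_spec w hmem]
    exact SimpleGraph.Walk.support_append _ _
  have hnodup : w.support.Nodup := (pa_isPath hT p r).support_nodup
  rw [hsplit] at hnodup
  have hdisj := List.disjoint_of_nodup_append hnodup
  have hp1 : p ∈ (w.takeUntil z hmem).support := SimpleGraph.Walk.start_mem_support _
  have hp2 : p ∈ (w.dropUntil z hmem).support.tail := by
    have hcons := (w.dropUntil z hmem).support_eq_cons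
    rw [hcons] at hpmem
    rcases List.mem_cons.mp hpmem with h | h
    · exact absurd h hz.1.ne
    · exact h
  exact List.disjoint_left.mp hdisj hp1 hp2

lemma subtree_self (r q : ι) : q ∈ subtreeNodes T r q :=
  fun w => w.start_mem_support

lemma p_mem_walk_of_sub (hT : T.IsTree) {r p k z : ι} (hz : IsChild T r p z)
    (hk : k ∈ subtreeNodes T r z) (w : T.Walk k r) : p ∈ w.support := by
  classical
  have hzw : z ∈ w.support := hk w
  have := hz.2 (w.dropUntil z hzw)
  exact SimpleGraph.Walk.support_dropUntil_subset w hzw this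

lemma sub_trans_p (hT : T.IsTree) {r p k z : ι} (hz : IsChild T r p z)
    (hk : k ∈ subtreeNodes T r z) : k ∈ subtreeNodes T r p :=
  fun w => p_mem_walk_of_sub hT hz hk w

lemma p_not_sub (hT : T.IsTree) {r p z : ι} (hz : IsChild T r p z) :
    p ∉ subtreeNodes T r z := by
  rw [mem_subtreeNodes_iff hT]
  exact child_not_mem_pa_pr hT r p z hz

lemma pa_child_r (hT : T.IsTree) {r p z : ι} (hz : IsChild T r p z) :
    pa hT z r = SimpleGraph.Walk.cons hz.1.symm (pa hT p r) := by
  refine (pa_unique hT _ ?_).symm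
  rw [SimpleGraph.Walk.cons_isPath_iff]
  exact ⟨pa_isPath hT p r, child_not_mem_pa_pr hT r p z hz⟩

lemma child_not_mem_pa_child_r (hT : T.IsTree) {r p z z' : ι}
    (hz : IsChild T r p z) (hz' : IsChild T r p z') (hne : z' ≠ z) :
    z' ∉ (pa hT z r).support := by
  rw [pa_child_r hT hz, SimpleGraph.Walk.support_cons]
  intro hmem
  rcases List.mem_cons.mp hmem with h | h
  · exact hne h
  · exact child_not_mem_pa_pr hT r p z' hz' h

/-- If a path starts at `p` and contains a vertex `z` adjacent to `p`,
then `z` is the second vertex. -/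
lemma second_of_path (hT : T.IsTree) {p k z : ι} (q : T.Walk p k) (hq : q.IsPath)
    (hadj : T.Adj p z) (hz : z ∈ q.support) :
    ∃ t, q.support = p :: z :: t := by
  classical
  have htp : (q.takeUntil z hz).IsPath := hq.takeUntil hz
  have heq : q.takeUntil z hz = SimpleGraph.Walk.cons hadj SimpleGraph.Walk.nil := by
    rw [pa_unique hT _ htp, pa_adj hT hadj]
  have hsplit : q.support = (q.takeUntil z hz).support ++ (q.dropUntil z hz).support.tail := by
    conv_lhs => rw [← SimpleGraph.Walk.take_spec q hz]
    exact SimpleGraph.Walk.support_append _ _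
  rw [heq] at hsplit
  exact ⟨(q.dropUntil z hz).support.tail, by simpa using hsplit⟩

lemma sub_disj (hT : T.IsTree) {r p k zi zj : ι}
    (hzi : IsChild T r p zi) (hzj : IsChild T r p zj) (hne : zi ≠ zj)
    (hki : k ∈ subtreeNodes T r zi) (hkj : k ∈ subtreeNodes T r zj) : False := by
  classical
  have hp : p ∈ (pa hT k r).support := p_mem_walk_of_sub hT hzi hki _
  set w := pa hT k r with hw
  set tk := w.takeUntil p hp with htk
  have htkp : tk.IsPath := (pa_isPath hT k r).takeUntil hp
  have hdrop : w.dropUntil p hp = pa hT p r := pa_unique hT _ ((pa_isPath hT k r).dropUntil hp)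
  have hsplit : w.support = tk.support ++ (w.dropUntil p hp).support.tail := by
    conv_lhs => rw [← SimpleGraph.Walk.take_spec w hp]
    exact SimpleGraph.Walk.support_append _ _
  have hmemtk : ∀ z', IsChild T r p z' → z' ∈ w.support → z' ∈ tk.support := by
    intro z' hz' hmem
    rw [hsplit] at hmem
    rcases List.mem_append.mp hmem with h | h
    · exact h
    · exfalso
      have : z' ∈ (w.dropUntil p hp).support := List.mem_of_mem_tail h
      rw [hdrop] at this
      exact child_not_mem_pa_pr hT r p z' hz' this
  have hi : zi ∈ tk.support := hmemtk zi hzi (hki w)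
  have hj : zj ∈ tk.support := hmemtk zj hzj (hkj w)
  -- reverse the path so it starts at p
  have hirev : zi ∈ tk.reverse.support := by
    rw [SimpleGraph.Walk.support_reverse, List.mem_reverse]; exact hi
  have hjrev : zj ∈ tk.reverse.support := by
    rw [SimpleGraph.Walk.support_reverse, List.mem_reverse]; exact hj
  obtain ⟨t1, ht1⟩ := second_of_path hT tk.reverse htkp.reverse hzi.1 hirev
  obtain ⟨t2, ht2⟩ := second_of_path hT tk.reverse htkp.reverse hzj.1 hjrev
  rw [ht1] at ht2
  simp only [List.cons.injEq, true_and] at ht2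
  exact hne ht2.1

lemma exists_child (hT : T.IsTree) {r p k : ι}
    (hk : k ∈ subtreeNodes T r p) (hne : k ≠ p) :
    ∃ z, IsChild T r p z ∧ k ∈ subtreeNodes T r z := by
  classical
  have hp : p ∈ (pa hT k r).support := hk _
  set tk := (pa hT k r).takeUntil p hp with htk
  have htkp : tk.IsPath := (pa_isPath hT k r).takeUntil hp
  have hrevp : tk.reverse.IsPath := htkp.reverse
  obtain ⟨z, hadj, q, heq⟩ := SimpleGraph.Walk.exists_eq_cons_of_ne (Ne.symm hne) tk.reverse
  have hqp : ¬ p ∈ q.support := by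
    rw [heq, SimpleGraph.Walk.cons_isPath_iff] at hrevp
    exact hrevp.2
  have hpzr : p ∈ (pa hT z r).support := by
    by_contra hpz
    have hW : p ∈ (q.reverse.append (pa hT z r)).support := hk _
    rcases (SimpleGraph.Walk.mem_support_append_iff _ _).mp hW with h | h
    · rw [SimpleGraph.Walk.support_reverse, List.mem_reverse] at h
      exact hqp h
    · exact hpz h
  refine ⟨z, ⟨hadj, fun w => pa_support_subset hT w hpzr⟩, ?_⟩
  rw [mem_subtreeNodes_iff hT]
  have hzrev : z ∈ tk.reverse.support := by
    rw [heq]; simp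
  have hztk : z ∈ tk.support := by
    rw [SimpleGraph.Walk.support_reverse, List.mem_reverse] at hzrev; exact hzrev
  exact SimpleGraph.Walk.support_takeUntil_subset _ hp hztk

lemma mem_reach (hT : T.IsTree) {r k m z : ι}
    (hk : k ∈ subtreeNodes T r z) (hm : m ∉ subtreeNodes T r z) :
    z ∈ (pa hT k m).support := by
  have hW : z ∈ ((pa hT k m).append (pa hT m r)).support := hk _
  rcases (SimpleGraph.Walk.mem_support_append_iff _ _).mp hW with h | h
  · exact h
  · exact absurd ((mem_subtreeNodes_iff hT r z m).mpr h) hm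

lemma p_between (hT : T.IsTree) {r p k m zi zj : ι}
    (hzi : IsChild T r p zi) (hzj : IsChild T r p zj) (hne : zi ≠ zj)
    (hki : k ∈ subtreeNodes T r zi) (hmj : m ∈ subtreeNodes T r zj) :
    p ∈ (pa hT k m).support := by
  classical
  have hmi : m ∉ subtreeNodes T r zi := fun h => sub_disj hT hzi hzj hne h hmj
  have hci : zi ∈ (pa hT k m).support := mem_reach hT hki hmi
  set b := (pa hT k m).dropUntil zi hci with hb
  have hbp : b.IsPath := (pa_isPath hT k m).dropUntil hci
  have hcj : zj ∈ b.support := by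
    have hW : zj ∈ (b.reverse.append (pa hT zi r)).support := hmj _
    rcases (SimpleGraph.Walk.mem_support_append_iff _ _).mp hW with h | h
    · rw [SimpleGraph.Walk.support_reverse, List.mem_reverse] at h; exact h
    · exact absurd h (child_not_mem_pa_child_r hT hzi hzj (Ne.symm hne))
  have hb1p : (b.takeUntil zj hcj).IsPath := hbp.takeUntil hcj
  have h2 : (SimpleGraph.Walk.cons hzi.1.symm
      (SimpleGraph.Walk.cons hzj.1 SimpleGraph.Walk.nil) : T.Walk zi zj).IsPath := by
    rw [SimpleGraph.Walk.cons_isPath_iff]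
    constructor
    · rw [SimpleGraph.Walk.cons_isPath_iff]
      exact ⟨SimpleGraph.Walk.IsPath.nil, by simp [hzj.1.ne]⟩
    · simp [hzi.1.ne.symm, hne]
  have heq : b.takeUntil zj hcj = SimpleGraph.Walk.cons hzi.1.symm
      (SimpleGraph.Walk.cons hzj.1 SimpleGraph.Walk.nil) := by
    rw [pa_unique hT _ hb1p, pa_unique hT _ h2]
  have hpmem : p ∈ (b.takeUntil zj hcj).support := by
    rw [heq]; simp
  exact SimpleGraph.Walk.support_dropUntil_subset _ hci
    (SimpleGraph.Walk.support_takeUntil_subset _ hcj hpmem)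

lemma p_mem_pa_of_not_subp (hT : T.IsTree) {r p k m : ι}
    (hk : k ∈ subtreeNodes T r p) (hm : m ∉ subtreeNodes T r p) :
    p ∈ (pa hT k m).support :=
  mem_reach hT hk hm

end MergedAux

/-- merging orientations along a clique tree stays acyclic.  Let
`G` be chordal with rooted clique tree `T`, `p` a node with children
`c 0, …, c (ℓ-1)`, `OC` an acyclic orientation of `lnk(C p)`, and for each `i`
let `Oᵢ` be an acyclic orientation of `G[V[T_{cᵢ}]]` consistent with `OC`
restricted to `E(sep(cᵢ), V[T_{cᵢ}])`.  Then the union orientation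
`OC ∪ O₀ ∪ … ∪ O_{ℓ-1}` is acyclic. -/
theorem merged_orientation_acyclic {V ι : Type*} [Fintype V] [DecidableEq V]
    (G : SimpleGraph V) (hchordal : IsChordal G)
    (T : SimpleGraph ι) (hT : T.IsTree) (r : ι)
    (C : ι → Finset V)
    (hclique : ∀ i, G.IsClique (C i : Set V))
    (hmax : ∀ i, ∀ S : Finset V, G.IsClique (S : Set V) → C i ⊆ S → S = C i)
    (hedge : ∀ u v, G.Adj u v → ∃ i, u ∈ C i ∧ v ∈ C i)
    (hsubtree : ∀ (x : V) (i j : ι), x ∈ C i → x ∈ C j →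
      ∃ w : T.Walk i j, ∀ m ∈ w.support, x ∈ C m)
    (p : ι) (ℓ : ℕ) (c : Fin ℓ → ι)
    (hchild : ∀ i, IsChild T r p (c i)) (hcinj : Function.Injective c)
    (hallchild : ∀ j, IsChild T r p j → ∃ i, c i = j)
    (OC : V → V → Prop)
    (hOCor : Orients (linkRel G (C p : Set V) (subtreeVerts T r p C)) OC)
    (hOCacyc : AcyclicRel OC)
    (O : Fin ℓ → (V → V → Prop))
    (hOor : ∀ i, Orients (inducedRel G (subtreeVerts T r (c i) C)) (O i))
    (hOacyc : ∀ i, AcyclicRel (O i))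
    (hcons : ∀ i u v,
      linkRel G ((C (c i) ∩ C p : Finset V) : Set V) (subtreeVerts T r (c i) C) u v →
      (O i u v ↔ OC u v)) :
    AcyclicRel (fun u v => OC u v ∨ ∃ i, O i u v) := by
  classical
  have hPVT : ∀ x : V, x ∈ C p → x ∈ subtreeVerts T r p C :=
    fun x hx => ⟨p, MergedAux.subtree_self r p, hx⟩
  have clique_path : ∀ {x : V} {k m : ι}, x ∈ C k → x ∈ C m →
      ∀ n ∈ (MergedAux.pa hT k m).support, x ∈ C n := by
    intro x k m h1 h2 n hn
    obtain ⟨w, hw⟩ := hsubtree x k m h1 h2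
    exact hw n (MergedAux.pa_support_subset hT w hn)
  have sep_of : ∀ {x : V} {i : Fin ℓ}, x ∈ (C p : Set V) →
      x ∈ subtreeVerts T r (c i) C → x ∈ C (c i) := by
    rintro x i hxp ⟨k, hk, hxk⟩
    have hpn : p ∉ subtreeNodes T r (c i) := MergedAux.p_not_sub hT (hchild i)
    have hm : c i ∈ (MergedAux.pa hT k p).support := MergedAux.mem_reach hT hk hpn
    exact clique_path hxk hxp _ hm
  have unique_S : ∀ {x : V} {i j : Fin ℓ}, x ∉ (C p : Set V) →
      x ∈ subtreeVerts T r (c i) C → x ∈ subtreeVerts T r (c j) C → i = j := by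
    intro x i j hxp hxi hxj
    by_contra hne
    obtain ⟨k, hk, hxk⟩ := hxi
    obtain ⟨m, hm, hxm⟩ := hxj
    have hcne : c i ≠ c j := fun h => hne (hcinj h)
    have hp := MergedAux.p_between hT (hchild i) (hchild j) hcne hk hm
    exact hxp (clique_path hxk hxm p hp)
  have memS : ∀ {x : V}, x ∈ subtreeVerts T r p C → x ∉ (C p : Set V) →
      ∃ i : Fin ℓ, x ∈ subtreeVerts T r (c i) C := by
    rintro x ⟨k, hk, hxk⟩ hxp
    have hkp : k ≠ p := fun h => hxp (by rw [h] at hxk; exact hxk)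
    obtain ⟨z, hz, hkz⟩ := MergedAux.exists_child hT hk hkp
    obtain ⟨i, rfl⟩ := hallchild z hz
    exact ⟨i, k, hkz, hxk⟩
  have E3 : ∀ {u x : V} {i : Fin ℓ}, u ∈ (C p : Set V) → x ∈ subtreeVerts T r (c i) C →
      x ∉ (C p : Set V) → G.Adj u x → u ∈ C (c i) := by
    intro u x i hu hx hxp hadj
    obtain ⟨k, hk, hxk⟩ := hx
    obtain ⟨m, hum, hxm⟩ := hedge u x hadj
    by_cases hm : m ∈ subtreeNodes T r (c i)
    · have hpn : p ∉ subtreeNodes T r (c i) := MergedAux.p_not_sub hT (hchild i)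
      have h1 : c i ∈ (MergedAux.pa hT m p).support := MergedAux.mem_reach hT hm hpn
      have h2 : c i ∈ (MergedAux.pa hT p m).support := MergedAux.mem_pa_rev hT h1
      exact clique_path hu hum _ h2
    · exfalso
      apply hxp
      by_cases hmp : m ∈ subtreeNodes T r p
      · by_cases hmpeq : m = p
        · subst hmpeq; exact hxm
        · obtain ⟨z, hz, hmz⟩ := MergedAux.exists_child hT hmp hmpeq
          obtain ⟨j, rfl⟩ := hallchild z hz
          have hcne : c i ≠ c j := by
            intro h
            rw [← h] at hmz
            exact hm hmz
          have hp := MergedAux.p_between hT (hchild i) (hchild j) hcne hk hmz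
          exact clique_path hxk hxm p hp
      · have hkp : k ∈ subtreeNodes T r p := MergedAux.sub_trans_p hT (hchild i) hk
        have hp := MergedAux.mem_reach hT hkp hmp
        exact clique_path hxk hxm p hp
  -- edge classification
  have edge_PP : ∀ {u w : V}, (OC u w ∨ ∃ i, O i u w) → u ∈ (C p : Set V) →
      w ∈ (C p : Set V) → OC u w := by
    intro u w hd hu hw
    rcases hd with h | ⟨j, h⟩
    · exact h
    · have hind := (hOor j).1 u w h
      have husep : u ∈ C (c j) := sep_of hu hind.2.1
      exact (hcons j u w ⟨hind.1,
        Or.inl ⟨Finset.mem_coe.mpr (Finset.mem_inter.mpr ⟨husep, hu⟩), hind.2.2⟩⟩).mp h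
  have edge_toS : ∀ {u w : V}, (OC u w ∨ ∃ i, O i u w) → w ∉ (C p : Set V) →
      ∃ i, O i u w ∧ u ∈ subtreeVerts T r (c i) C ∧ w ∈ subtreeVerts T r (c i) C := by
    intro u w hd hwp
    rcases hd with h | ⟨j, h⟩
    · obtain ⟨hadj, hcase⟩ := hOCor.1 u w h
      rcases hcase with ⟨huP, hwV⟩ | ⟨hwP, _⟩
      · obtain ⟨i, hwi⟩ := memS hwV hwp
        have husep : u ∈ C (c i) := E3 huP hwi hwp hadj
        have hO : O i u w := (hcons i u w ⟨hadj,
          Or.inl ⟨Finset.mem_coe.mpr (Finset.mem_inter.mpr ⟨husep, huP⟩), hwi⟩⟩).mpr h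
        exact ⟨i, hO, ⟨c i, MergedAux.subtree_self r (c i), husep⟩, hwi⟩
      · exact absurd hwP hwp
    · have hind := (hOor j).1 u w h
      exact ⟨j, h, hind.2.1, hind.2.2⟩
  have edge_fromS : ∀ {u w : V}, (OC u w ∨ ∃ i, O i u w) → u ∉ (C p : Set V) →
      ∃ i, O i u w ∧ u ∈ subtreeVerts T r (c i) C ∧ w ∈ subtreeVerts T r (c i) C := by
    intro u w hd hup
    rcases hd with h | ⟨j, h⟩
    · obtain ⟨hadj, hcase⟩ := hOCor.1 u w h
      rcases hcase with ⟨huP, _⟩ | ⟨hwP, huV⟩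
      · exact absurd huP hup
      · obtain ⟨i, hui⟩ := memS huV hup
        have hwsep : w ∈ C (c i) := E3 hwP hui hup hadj.symm
        have hO : O i u w := (hcons i u w ⟨hadj,
          Or.inr ⟨Finset.mem_coe.mpr (Finset.mem_inter.mpr ⟨hwsep, hwP⟩), hui⟩⟩).mpr h
        exact ⟨i, hO, hui, ⟨c i, MergedAux.subtree_self r (c i), hwsep⟩⟩
    · have hind := (hOor j).1 u w h
      exact ⟨j, h, hind.2.1, hind.2.2⟩
  have dich : ∀ {u w : V}, u ∈ (C p : Set V) → w ∈ (C p : Set V) → u ≠ w →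
      OC u w ∨ OC w u := by
    intro u w hu hw hne
    have hadj : G.Adj u w := hclique p hu hw hne
    have hl : linkRel G (C p : Set V) (subtreeVerts T r p C) u w :=
      ⟨hadj, Or.inl ⟨hu, hPVT w hw⟩⟩
    by_cases h : OC w u
    · exact Or.inr h
    · exact Or.inl ((hOCor.2 u w hl).mpr h)
  have sepO : ∀ {i : Fin ℓ} {u w : V}, u ∈ (C p : Set V) → u ∈ subtreeVerts T r (c i) C →
      w ∈ subtreeVerts T r (c i) C → OC u w → O i u w := by
    intro i u w huP huS hwS h
    have hadj : G.Adj u w := (hOCor.1 u w h).1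
    have husep : u ∈ C (c i) := sep_of huP huS
    exact (hcons i u w ⟨hadj,
      Or.inl ⟨Finset.mem_coe.mpr (Finset.mem_inter.mpr ⟨husep, huP⟩), hwS⟩⟩).mpr h
  have collapse : ∀ {i : Fin ℓ} {u w : V}, u ∈ (C p : Set V) → w ∈ (C p : Set V) →
      u ∈ subtreeVerts T r (c i) C → w ∈ subtreeVerts T r (c i) C →
      Relation.TransGen (O i) u w → OC u w := by
    intro i u w hu hw huS hwS htg
    have hne : u ≠ w := by rintro rfl; exact hOacyc i u htg
    rcases dich hu hw hne with h | h
    · exact h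
    · exact absurd (htg.tail (sepO hw hwS huS h)) (hOacyc i u)
  -- the normal form invariant
  have key : ∀ (x y : V), Relation.TransGen (fun u v => OC u v ∨ ∃ i, O i u v) x y →
      (x ∈ (C p : Set V) ∧ y ∈ (C p : Set V) ∧ Relation.TransGen OC x y) ∨
      (x ∈ (C p : Set V) ∧ y ∉ (C p : Set V) ∧ ∃ (i : Fin ℓ) (u : V), u ∈ (C p : Set V) ∧
        u ∈ subtreeVerts T r (c i) C ∧ y ∈ subtreeVerts T r (c i) C ∧
        Relation.ReflTransGen OC x u ∧ Relation.TransGen (O i) u y) ∨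
      (x ∉ (C p : Set V) ∧ y ∈ (C p : Set V) ∧ ∃ (i : Fin ℓ) (w : V), w ∈ (C p : Set V) ∧
        w ∈ subtreeVerts T r (c i) C ∧ x ∈ subtreeVerts T r (c i) C ∧
        Relation.TransGen (O i) x w ∧ Relation.ReflTransGen OC w y) ∨
      (x ∉ (C p : Set V) ∧ y ∉ (C p : Set V) ∧ ∃ i : Fin ℓ,
        x ∈ subtreeVerts T r (c i) C ∧ y ∈ subtreeVerts T r (c i) C ∧
        Relation.TransGen (O i) x y) ∨
      (x ∉ (C p : Set V) ∧ y ∉ (C p : Set V) ∧ ∃ (i j : Fin ℓ) (w u : V),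
        x ∈ subtreeVerts T r (c i) C ∧ w ∈ (C p : Set V) ∧ w ∈ subtreeVerts T r (c i) C ∧
        u ∈ (C p : Set V) ∧ u ∈ subtreeVerts T r (c j) C ∧ y ∈ subtreeVerts T r (c j) C ∧
        Relation.TransGen (O i) x w ∧ Relation.ReflTransGen OC w u ∧
        Relation.TransGen (O j) u y) := by
    intro x y h
    induction h with
    | single hd =>
      rename_i b
      by_cases hxP : x ∈ (C p : Set V) <;> by_cases hbP : b ∈ (C p : Set V)
      · exact Or.inl ⟨hxP, hbP, Relation.TransGen.single (edge_PP hd hxP hbP)⟩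
      · obtain ⟨i, hO, hxS, hbS⟩ := edge_toS hd hbP
        exact Or.inr (Or.inl ⟨hxP, hbP, i, x, hxP, hxS, hbS,
          Relation.ReflTransGen.refl, Relation.TransGen.single hO⟩)
      · obtain ⟨i, hO, hxS, hbS⟩ := edge_fromS hd hxP
        exact Or.inr (Or.inr (Or.inl ⟨hxP, hbP, i, b, hbP, hbS, hxS,
          Relation.TransGen.single hO, Relation.ReflTransGen.refl⟩))
      · obtain ⟨i, hO, hxS, hbS⟩ := edge_toS hd hbP
        exact Or.inr (Or.inr (Or.inr (Or.inl ⟨hxP, hbP, i, hxS, hbS,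
          Relation.TransGen.single hO⟩)))
    | tail hxb hbz ih =>
      rename_i b z
      by_cases hzP : z ∈ (C p : Set V)
      · rcases ih with ⟨hxP, hbP, htg⟩ |
          ⟨hxP, hbP, i, u, huP, huS, hbS, hrt, htg⟩ |
          ⟨hxP, hbP, i, w, hwP, hwS, hxS, htg, hrt⟩ |
          ⟨hxP, hbP, i, hxS, hbS, htg⟩ |
          ⟨hxP, hbP, i, j, w, u, hxS, hwP, hwS, huP, huS, hbS, htg1, hrt, htg2⟩
        · exact Or.inl ⟨hxP, hzP, htg.tail (edge_PP hbz hbP hzP)⟩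
        · obtain ⟨j, hO, hbS', hzS'⟩ := edge_fromS hbz hbP
          obtain rfl : j = i := unique_S hbP hbS' hbS
          have hOCuz : OC u z := collapse huP hzP huS hzS' (htg.tail hO)
          exact Or.inl ⟨hxP, hzP, Relation.TransGen.tail' hrt hOCuz⟩
        · exact Or.inr (Or.inr (Or.inl ⟨hxP, hzP, i, w, hwP, hwS, hxS, htg,
            hrt.tail (edge_PP hbz hbP hzP)⟩))
        · obtain ⟨j, hO, hbS', hzS'⟩ := edge_fromS hbz hbP
          obtain rfl : j = i := unique_S hbP hbS' hbS
          exact Or.inr (Or.inr (Or.inl ⟨hxP, hzP, j, z, hzP, hzS', hxS,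
            htg.tail hO, Relation.ReflTransGen.refl⟩))
        · obtain ⟨j', hO, hbS', hzS'⟩ := edge_fromS hbz hbP
          obtain rfl : j' = j := unique_S hbP hbS' hbS
          have hOCuz : OC u z := collapse huP hzP huS hzS' (htg2.tail hO)
          exact Or.inr (Or.inr (Or.inl ⟨hxP, hzP, i, w, hwP, hwS, hxS, htg1,
            hrt.tail hOCuz⟩))
      · rcases ih with ⟨hxP, hbP, htg⟩ |
          ⟨hxP, hbP, i, u, huP, huS, hbS, hrt, htg⟩ |
          ⟨hxP, hbP, i, w, hwP, hwS, hxS, htg, hrt⟩ |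
          ⟨hxP, hbP, i, hxS, hbS, htg⟩ |
          ⟨hxP, hbP, i, j, w, u, hxS, hwP, hwS, huP, huS, hbS, htg1, hrt, htg2⟩
        · obtain ⟨i, hO, hbS', hzS'⟩ := edge_toS hbz hzP
          exact Or.inr (Or.inl ⟨hxP, hzP, i, b, hbP, hbS', hzS',
            htg.to_reflTransGen, Relation.TransGen.single hO⟩)
        · obtain ⟨j, hO, hbS', hzS'⟩ := edge_fromS hbz hbP
          obtain rfl : j = i := unique_S hbP hbS' hbS
          exact Or.inr (Or.inl ⟨hxP, hzP, j, u, huP, huS, hzS', hrt, htg.tail hO⟩)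
        · obtain ⟨j, hO, hbS', hzS'⟩ := edge_toS hbz hzP
          exact Or.inr (Or.inr (Or.inr (Or.inr ⟨hxP, hzP, i, j, w, b, hxS, hwP, hwS,
            hbP, hbS', hzS', htg, hrt, Relation.TransGen.single hO⟩)))
        · obtain ⟨j, hO, hbS', hzS'⟩ := edge_fromS hbz hbP
          obtain rfl : j = i := unique_S hbP hbS' hbS
          exact Or.inr (Or.inr (Or.inr (Or.inl ⟨hxP, hzP, j, hxS, hzS', htg.tail hO⟩)))
        · obtain ⟨j', hO, hbS', hzS'⟩ := edge_fromS hbz hbP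
          obtain rfl : j' = j := unique_S hbP hbS' hbS
          exact Or.inr (Or.inr (Or.inr (Or.inr ⟨hxP, hzP, i, j', w, u, hxS, hwP, hwS,
            huP, huS, hzS', htg1, hrt, htg2.tail hO⟩)))
  intro v hcyc
  rcases key v v hcyc with ⟨_, _, htg⟩ |
      ⟨hvP, hvP', _⟩ |
      ⟨hvP, hvP', _⟩ |
      ⟨_, _, i, _, _, htg⟩ |
      ⟨hvP, _, i, j, w, u, hvSi, hwP, hwS, huP, huS, hvSj, htg1, hrt, htg2⟩
  · exact hOCacyc v htg
  · exact hvP' hvP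
  · exact hvP hvP'
  · exact hOacyc i v htg
  · obtain rfl : j = i := unique_S hvP hvSj hvSi
    rcases Relation.reflTransGen_iff_eq_or_transGen.mp hrt with rfl | htgOC
    · exact hOacyc j v (htg1.trans htg2)
    · have hne : w ≠ u := by rintro rfl; exact hOCacyc w htgOC
      rcases dich hwP huP hne with h | h
      · exact hOacyc j v (((htg1.tail (sepO hwP hwS huS h)).trans htg2))
      · exact hOCacyc w (htgOC.tail h)
end

section
/- Weighted directed matrix-tree theorem: let G = (V,E,w) be a weighted directed graph on n vertices with positive weights, and r ∈ V. Then the sum over all spanning out-arborescences T rooted at r of ∏_{e∈T} w(e) equals det(L^r_{1,w}), the determinant of the weighted in-Laplacian L_{1,w} = D_in,w - A_w with the r-th row and column removed. -/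
open Finset
open scoped Classical

/-- The weighted in-Laplacian `L_{1,w} = D_in,w - A_w` of a weighted digraph. -/
noncomputable def inLaplacian {V : Type*} [Fintype V] [DecidableEq V]
    (w : V → V → ℝ) : Matrix V V ℝ :=
  fun i j => (if i = j then ∑ u, w u i else 0) - w i j

/-- Determinant of the in-Laplacian with row and column `r` removed. -/
noncomputable def reducedDet {V : Type*} [Fintype V] [DecidableEq V]
    (w : V → V → ℝ) (r : V) : ℝ :=
  Matrix.det ((inLaplacian w).submatrix
    (Subtype.val : {v : V // v ≠ r} → V) (Subtype.val : {v : V // v ≠ r} → V))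

/-- The directed "is-parent-of" relation induced by a parent map `f`:
`parentRel r f u v` holds when `u` is the parent of `v ≠ r`. -/
def parentRel {V : Type*} (r : V) (f : {v : V // v ≠ r} → V) : V → V → Prop :=
  fun u v => ∃ h : v ≠ r, f ⟨v, h⟩ = u

/-- `f` encodes a spanning out-arborescence of the digraph `E` rooted at `r`:
every vertex `v ≠ r` has a unique parent `f v` with `(f v, v)` an edge, and
the parent relation is acyclic (hence every vertex is reached from `r`). -/
def IsArborescence {V : Type*} (E : V → V → Prop) (r : V)
    (f : {v : V // v ≠ r} → V) : Prop :=
  (∀ v : {v : V // v ≠ r}, E (f v) v.1) ∧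
    (∀ v, ¬ Relation.TransGen (parentRel r f) v v)

section Aux
variable {V : Type*} [Fintype V] [DecidableEq V] {r : V} {f : {v : V // v ≠ r} → V}

/-- Total version of the parent map, fixing the root. -/
noncomputable def Gmap (r : V) (f : {v : V // v ≠ r} → V) : V → V :=
  fun u => if h : u ≠ r then f ⟨u, h⟩ else r

lemma Gmap_root : Gmap r f r = r := dif_neg (by simp)

lemma Gmap_coe (v : {v : V // v ≠ r}) : Gmap r f v.1 = f v := dif_pos v.2

lemma Gmap_of_ne {u : V} (h : u ≠ r) : Gmap r f u = f ⟨u, h⟩ := dif_pos h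

lemma Gmap_iter_root (k : ℕ) : (Gmap r f)^[k] r = r :=
  Function.iterate_fixed Gmap_root k

lemma eq_root_of_iter_eq_root {u : V} {k j : ℕ} (hj : j ≤ k)
    (hk : (Gmap r f)^[k] u = u) (h : (Gmap r f)^[j] u = r) : u = r := by
  have : (Gmap r f)^[k] u = r := by
    rw [← Nat.sub_add_cancel hj, Function.iterate_add_apply, h, Gmap_iter_root]
  rw [hk] at this; exact this

/-- Periodic points of the parent map other than the root. -/
def Per (r : V) (f : {v : V // v ≠ r} → V) (u : V) : Prop :=
  u ≠ r ∧ ∃ k, 0 < k ∧ (Gmap r f)^[k] u = u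

lemma Per.next {u : V} (h : Per r f u) : Per r f (Gmap r f u) := by
  obtain ⟨hu, k, hk, hiter⟩ := h
  have hne : Gmap r f u ≠ r := by
    intro hr
    exact hu (eq_root_of_iter_eq_root (j := 1) hk hiter (by simpa using hr))
  exact ⟨hne, k, hk, by
    rw [← Function.iterate_succ_apply, Function.iterate_succ_apply', hiter]⟩

lemma Per.inj {a b : V} (ha : Per r f a) (hb : Per r f b)
    (hab : Gmap r f a = Gmap r f b) : a = b := by
  obtain ⟨-, ka, hka, ha'⟩ := ha
  obtain ⟨-, kb, hkb, hb'⟩ := hb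
  have hA : (Gmap r f)^[ka * kb] a = a := by
    rw [Function.iterate_mul]; exact Function.iterate_fixed ha' kb
  have hB : (Gmap r f)^[ka * kb] b = b := by
    rw [mul_comm, Function.iterate_mul]; exact Function.iterate_fixed hb' ka
  obtain ⟨m, hm⟩ : ∃ m, ka * kb = m + 1 :=
    ⟨ka * kb - 1, (Nat.sub_add_cancel (Nat.mul_pos hka hkb)).symm⟩
  rw [hm] at hA hB
  calc a = (Gmap r f)^[m + 1] a := hA.symm
    _ = (Gmap r f)^[m] (Gmap r f a) := Function.iterate_succ_apply _ _ _
    _ = (Gmap r f)^[m] (Gmap r f b) := by rw [hab]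
    _ = b := by rw [← Function.iterate_succ_apply, hB]

lemma transGen_aux {a b : V} (h : Relation.TransGen (parentRel r f) a b) :
    b ≠ r ∧ ∃ k, 0 < k ∧ (Gmap r f)^[k] b = a := by
  induction h with
  | single h =>
    obtain ⟨hb, hf⟩ := h
    exact ⟨hb, 1, one_pos, (Gmap_of_ne hb).trans hf⟩
  | tail _ hrel ih =>
    obtain ⟨hb, k, hk, hiter⟩ := ih
    obtain ⟨hc, hf⟩ := hrel
    refine ⟨hc, k + 1, Nat.succ_pos _, ?_⟩
    rw [Function.iterate_succ_apply]
    have hg : Gmap r f _ = _ := (dif_pos hc).trans hf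
    rw [hg, hiter]

lemma transGen_of_chain : ∀ (m : ℕ) (u : V), (∀ j, j ≤ m → (Gmap r f)^[j] u ≠ r) →
    Relation.TransGen (parentRel r f) ((Gmap r f)^[m + 1] u) u := by
  intro m
  induction m with
  | zero =>
    intro u h
    exact Relation.TransGen.single
      ⟨h 0 le_rfl, (Gmap_of_ne (h 0 le_rfl)).symm⟩
  | succ m ih =>
    intro u h
    have t1 := ih u (fun j hj => h j (le_trans hj (Nat.le_succ m)))
    refine Relation.TransGen.head ⟨h (m + 1) le_rfl, ?_⟩ t1
    show f ⟨(Gmap r f)^[m + 1] u, _⟩ = (Gmap r f)^[m + 1 + 1] u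
    conv_rhs => rw [Function.iterate_succ_apply']
    exact (Gmap_of_ne (h (m + 1) le_rfl)).symm

lemma per_transGen {u : V} (h : Per r f u) :
    Relation.TransGen (parentRel r f) u u := by
  obtain ⟨hu, k, hk, hiter⟩ := h
  obtain ⟨m, rfl⟩ : ∃ m, k = m + 1 := ⟨k - 1, (Nat.succ_pred_eq_of_pos hk).symm⟩
  have hne : ∀ j, j ≤ m → (Gmap r f)^[j] u ≠ r := fun j hj hr =>
    hu (eq_root_of_iter_eq_root (le_trans hj (Nat.le_succ m)) hiter hr)
  have := transGen_of_chain m u hne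
  rwa [hiter] at this

lemma iter_card_root (hacyc : ∀ v, ¬ Relation.TransGen (parentRel r f) v v) (u : V) :
    (Gmap r f)^[Fintype.card V] u = r := by
  obtain ⟨i, j, hne, hij⟩ := Fintype.exists_ne_map_eq_of_card_lt
    (fun i : Fin (Fintype.card V + 1) => (Gmap r f)^[i.1] u) (by simp)
  wlog hlt : i < j generalizing i j
  · exact this j i hne.symm hij.symm (lt_of_le_of_ne (not_lt.1 hlt) hne.symm)
  set p := (Gmap r f)^[i.1] u with hp
  have hd : (Gmap r f)^[j.1 - i.1] p = p := by
    rw [hp, ← Function.iterate_add_apply, Nat.sub_add_cancel hlt.le, ← hij]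
  have hpr : p = r := by
    by_contra hpr
    exact hacyc p (per_transGen ⟨hpr, j.1 - i.1, Nat.sub_pos_of_lt hlt, hd⟩)
  have hile : i.1 ≤ Fintype.card V := Nat.lt_succ_iff.1 i.2
  rw [← Nat.sub_add_cancel hile, Function.iterate_add_apply, ← hp, hpr, Gmap_iter_root]

/-- The 0-1 matrix of the parent map restricted to non-root vertices. -/
noncomputable def Pmat (r : V) (f : {v : V // v ≠ r} → V) :
    Matrix {v : V // v ≠ r} {v : V // v ≠ r} ℝ :=
  Matrix.of fun i j => if (i : V) = f j then 1 else 0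

lemma Pmat_pow : ∀ (k : ℕ) (i j : {v : V // v ≠ r}),
    (Pmat r f ^ (k + 1)) i j = if (i : V) = (Gmap r f)^[k + 1] (j : V) then 1 else 0 := by
  intro k
  induction k with
  | zero =>
    intro i j
    simp [Pmat, Gmap_coe j]
  | succ k ih =>
    intro i j
    rw [pow_succ, Matrix.mul_apply]
    by_cases h : f j = r
    · have hGj : Gmap r f (j : V) = r := (Gmap_coe j).trans h
      have hr : (Gmap r f)^[k + 1 + 1] (j : V) = r := by
        rw [Function.iterate_succ_apply, hGj, Gmap_iter_root]
      rw [hr, if_neg i.2]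
      refine Finset.sum_eq_zero fun m _ => ?_
      have hm0 : Pmat r f m j = 0 := by
        rw [Pmat, Matrix.of_apply, if_neg]
        intro hmf; exact m.2 (hmf.trans h)
      rw [hm0, mul_zero]
    · have hr : (Gmap r f)^[k + 1 + 1] (j : V) = (Gmap r f)^[k + 1] (f j) := by
        rw [Function.iterate_succ_apply, Gmap_coe j]
      rw [hr]
      rw [Finset.sum_eq_single (⟨f j, h⟩ : {v : V // v ≠ r})]
      · have h1 : Pmat r f (⟨f j, h⟩ : {v : V // v ≠ r}) j = 1 := by
          rw [Pmat, Matrix.of_apply, if_pos rfl]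
        rw [h1, mul_one, ih]
      · intro m _ hm
        have hm0 : Pmat r f m j = 0 := by
          rw [Pmat, Matrix.of_apply, if_neg]
          intro hmf; exact hm (Subtype.ext hmf)
        rw [hm0, mul_zero]
      · intro hmem; exact absurd (Finset.mem_univ _) hmem

lemma Pmat_nilpotent (hacyc : ∀ v, ¬ Relation.TransGen (parentRel r f) v v) :
    Pmat r f ^ (Fintype.card V) = 0 := by
  have hpos : 0 < Fintype.card V := Fintype.card_pos_iff.2 ⟨r⟩
  obtain ⟨m, hm⟩ : ∃ m, Fintype.card V = m + 1 :=
    ⟨Fintype.card V - 1, (Nat.succ_pred_eq_of_pos hpos).symm⟩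
  ext i j
  rw [hm, Pmat_pow]
  rw [← hm, iter_card_root hacyc]
  simp [i.2]

lemma det_one_sub_Pmat (hacyc : ∀ v, ¬ Relation.TransGen (parentRel r f) v v) :
    (1 - Pmat r f).det = 1 := by
  have hnil : IsNilpotent (Pmat r f) := ⟨Fintype.card V, Pmat_nilpotent hacyc⟩
  have hchar : (Pmat r f).charpoly =
      Polynomial.X ^ (Fintype.card {v : V // v ≠ r}) := by
    have h := Matrix.isNilpotent_charpoly_sub_pow_of_isNilpotent hnil
    rw [← sub_eq_zero]
    exact h.eq_zero
  have heval : Polynomial.eval 1 (Pmat r f).charpoly = (1 - Pmat r f).det := by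
    rw [Matrix.charpoly, ← Polynomial.coe_evalRingHom, RingHom.map_det]
    congr 1
    ext i j
    by_cases h : i = j <;>
      simp [Matrix.charmatrix_apply, Matrix.map_apply, Matrix.one_apply, h,
        Matrix.diagonal_apply, Matrix.sub_apply, RingHom.mapMatrix_apply]
  rw [← heval, hchar]
  simp

lemma det_one_sub_Pmat_cycle {v : V} (hv : Relation.TransGen (parentRel r f) v v) :
    (1 - Pmat r f).det = 0 := by
  rw [← Matrix.exists_mulVec_eq_zero_iff]
  have hPv : Per r f v := by
    obtain ⟨h1, h2⟩ := transGen_aux hv; exact ⟨h1, h2⟩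
  set x : {v : V // v ≠ r} → ℝ := fun j => if Per r f j.1 then 1 else 0 with hx
  have key : ∀ i, (Pmat r f).mulVec x i = x i := by
    intro i
    rw [Matrix.mulVec, dotProduct]
    by_cases hPi : Per r f i.1
    · obtain ⟨hir, k, hk, hiter⟩ := id hPi
      set p : V := (Gmap r f)^[k - 1] i.1 with hp
      have hGp : Gmap r f p = i.1 := by
        have h1 : Gmap r f ((Gmap r f)^[k - 1] (i : V))
            = (Gmap r f)^[k - 1 + 1] (i : V) := (Function.iterate_succ_apply' _ _ _).symm
        rw [hp, h1, Nat.sub_add_cancel hk, hiter]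
      have hpr : p ≠ r := fun hh => hir (by rw [← hGp, hh, Gmap_root])
      have hPerp : Per r f p := by
        refine ⟨hpr, k, hk, ?_⟩
        rw [hp, ← Function.iterate_add_apply, add_comm k (k - 1),
          Function.iterate_add_apply, hiter]
      rw [Finset.sum_eq_single (⟨p, hpr⟩ : {v : V // v ≠ r})]
      · have hfp : f ⟨p, hpr⟩ = (i : V) :=
          (Gmap_coe (f := f) ⟨p, hpr⟩).symm.trans hGp
        have h1 : Pmat r f i ⟨p, hpr⟩ = 1 := by
          rw [Pmat, Matrix.of_apply, if_pos hfp.symm]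
        show Pmat r f i ⟨p, hpr⟩ * (if Per r f p then (1:ℝ) else 0)
            = if Per r f i.1 then 1 else 0
        rw [h1, one_mul, if_pos hPerp, if_pos hPi]
      · intro m _ hm
        by_cases h1 : (i : V) = f m
        · by_cases h2 : Per r f m.1
          · exfalso
            apply hm
            apply Subtype.ext
            refine Per.inj h2 hPerp ?_
            rw [Gmap_coe (f := f) m, hGp]
            exact h1.symm
          · show Pmat r f i m * (if Per r f m.1 then (1:ℝ) else 0) = 0
            rw [if_neg h2, mul_zero]
        · show Pmat r f i m * x m = 0
          have h0 : Pmat r f i m = 0 := by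
            rw [Pmat, Matrix.of_apply, if_neg h1]
          rw [h0, zero_mul]
      · intro hmem; exact absurd (Finset.mem_univ _) hmem
    · have h0 : ∀ m : {v : V // v ≠ r},
          Pmat r f i m * x m = 0 := by
        intro m
        by_cases h1 : (i : V) = f m
        · by_cases h2 : Per r f m.1
          · exfalso
            apply hPi
            have hn := h2.next
            rwa [Gmap_coe (f := f) m, ← h1] at hn
          · show Pmat r f i m * (if Per r f m.1 then (1:ℝ) else 0) = 0
            rw [if_neg h2, mul_zero]
        · have hP0 : Pmat r f i m = 0 := by
            rw [Pmat, Matrix.of_apply, if_neg h1]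
          rw [hP0, zero_mul]
      rw [Finset.sum_eq_zero fun m _ => h0 m]
      show (0:ℝ) = if Per r f i.1 then 1 else 0
      rw [if_neg hPi]
  refine ⟨x, ?_, ?_⟩
  · intro h0
    have := congrFun h0 ⟨v, hPv.1⟩
    simp [hx, hPv] at this
  · funext i
    have := key i
    simp only [Matrix.sub_mulVec, Matrix.one_mulVec, Pi.sub_apply, this, Pi.zero_apply]
    rw [sub_self]

end Aux

section Expand
variable {V : Type*} [Fintype V] [DecidableEq V]

lemma reducedDet_expand (w : V → V → ℝ) (r : V) :
    reducedDet w r = ∑ g : {v : V // v ≠ r} → V,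
      (∏ v : {v : V // v ≠ r}, w (g v) v.1) * (1 - Pmat r g).det := by
  classical
  set c : V → {v : V // v ≠ r} → {v : V // v ≠ r} → ℝ :=
    fun u j i => (if i = j then 1 else 0) - (if (i : V) = u then 1 else 0) with hc
  have hA : Matrix.transpose ((inLaplacian w).submatrix
      (Subtype.val : {v : V // v ≠ r} → V) (Subtype.val : {v : V // v ≠ r} → V))
      = Matrix.of (fun j => ∑ u : V, w u j.1 • c u j) := by
    ext j i
    simp only [Matrix.transpose_apply, Matrix.submatrix_apply, Matrix.of_apply,
      inLaplacian, Finset.sum_apply, Pi.smul_apply, smul_eq_mul, hc]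
    rw [show (∑ u : V, w u (j : V) * ((if i = j then (1:ℝ) else 0) - (if (i : V) = u then 1 else 0)))
        = (∑ u : V, w u (j : V) * (if i = j then (1:ℝ) else 0))
          - ∑ u : V, w u (j : V) * (if (i : V) = u then 1 else 0) by
      rw [← Finset.sum_sub_distrib]; exact Finset.sum_congr rfl fun u _ => by ring]
    have h2 : (∑ u : V, w u (j : V) * (if (i : V) = u then (1:ℝ) else 0)) = w i.1 j.1 := by
      simp [mul_ite]
    rw [h2]
    by_cases h : i = j
    · subst h; simp
    · have h' : (i : V) ≠ (j : V) := fun hh => h (Subtype.ext hh)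
      simp [h, h']
  have hdet : reducedDet w r = (Matrix.of (fun j => ∑ u : V, w u j.1 • c u j)).det := by
    rw [← hA, Matrix.det_transpose]; rfl
  rw [hdet]
  have h1 : (Matrix.of (fun j => ∑ u : V, w u j.1 • c u j)).det
      = ∑ g : {v : V // v ≠ r} → V,
          Matrix.detRowAlternating (fun j => w (g j) j.1 • c (g j) j) :=
    MultilinearMap.map_sum (Matrix.detRowAlternating.toMultilinearMap)
      (fun (j : {v : V // v ≠ r}) (u : V) => w u j.1 • c u j)
  rw [h1]
  refine Finset.sum_congr rfl fun g _ => ?_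
  have h2 : Matrix.detRowAlternating (fun j => w (g j) j.1 • c (g j) j)
      = (∏ v : {v : V // v ≠ r}, w (g v) v.1) •
          Matrix.detRowAlternating (fun j => c (g j) j) :=
    MultilinearMap.map_smul_univ (Matrix.detRowAlternating.toMultilinearMap)
      (fun j => w (g j) j.1) (fun j => c (g j) j)
  rw [h2, smul_eq_mul]
  congr 1
  have hmat : Matrix.of (fun j => c (g j) j) = Matrix.transpose (1 - Pmat r g) := by
    ext j i
    simp [hc, Pmat, Matrix.one_apply, Matrix.sub_apply, Matrix.transpose_apply]
  calc Matrix.detRowAlternating (fun j => c (g j) j)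
      = (Matrix.of (fun j => c (g j) j)).det := rfl
    _ = (Matrix.transpose (1 - Pmat r g)).det := by rw [hmat]
    _ = (1 - Pmat r g).det := Matrix.det_transpose _

end Expand

/-- the weighted directed matrix-tree theorem.  For a weighted
digraph with edge set `E`, positive weights `w` on edges (and zero elsewhere),
the sum over all spanning out-arborescences rooted at `r` of the product of
their edge weights equals `det(L^r_{1,w})`. -/
theorem weighted_directed_matrix_tree {V : Type*} [Fintype V] [DecidableEq V]
    (E : V → V → Prop) (w : V → V → ℝ) (r : V)
    (hirr : ∀ i, ¬ E i i)
    (hpos : ∀ i j, E i j → 0 < w i j)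
    (hzero : ∀ i j, ¬ E i j → w i j = 0) :
    ∑ f ∈ Finset.univ.filter (IsArborescence E r),
        ∏ v : {v : V // v ≠ r}, w (f v) v.1
      = reducedDet w r := by
  classical
  rw [reducedDet_expand w r, Finset.sum_filter]
  refine Finset.sum_congr rfl fun g _ => ?_
  by_cases hcyc : ∃ v, Relation.TransGen (parentRel r g) v v
  · obtain ⟨v, hv⟩ := hcyc
    rw [det_one_sub_Pmat_cycle hv, mul_zero, if_neg]
    intro hrb
    exact hrb.2 v hv
  · push_neg at hcyc
    rw [det_one_sub_Pmat hcyc, mul_one]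
    by_cases hedge : ∀ v : {v : V // v ≠ r}, E (g v) v.1
    · rw [if_pos ⟨hedge, hcyc⟩]
    · rw [if_neg (fun hb => hedge hb.1)]
      push_neg at hedge
      obtain ⟨v, hv⟩ := hedge
      exact (Finset.prod_eq_zero (Finset.mem_univ v) (hzero _ _ hv)).symm
end

section
/- EWA bounded-differences stability: suppose the EWA forecaster with parameter η > 0 and finite expert class C (all experts P with min_x P(x) ≥ τ) is run on sample sequences differing in exactly one coordinate (say the first sample x^(1) vs x^(1)'). Then for every t and every y, the predicted mixtures satisfy τ^{2η} ≤ P̂'_t(y)/P̂_t(y) ≤ τ^{-2η}, and consequently |KL(P*‖(1/T)∑_t P̂'_t) - KL(P*‖(1/T)∑_t P̂_t)| ≤ 2η·log(1/τ). -/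
open Finset

/-- KL divergence between two distributions on a finite set. -/
noncomputable def klDiv {X : Type*} [Fintype X] (P Q : X → ℝ) : ℝ :=
  ∑ x, P x * Real.log (P x / Q x)

/-- The EWA forecaster's prediction at round `t` (a mixture of the experts in
`C` with exponential weights based on the samples observed before round `t`). -/
noncomputable def ewaPred {X : Type*} [Fintype X] (C : Finset (X → ℝ)) (η : ℝ)
    {T : ℕ} (xs : Fin T → X) (t : Fin T) : X → ℝ :=
  fun y =>
    (∑ Q ∈ C, (∏ s ∈ Finset.univ.filter (fun s : Fin T => s < t), Q (xs s) ^ η) * Q y) /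
      (∑ Q ∈ C, ∏ s ∈ Finset.univ.filter (fun s : Fin T => s < t), Q (xs s) ^ η)

/-- One-sided product stability: if two sequences differ only at `z`, the
exponentially-weighted products differ by at most a `τ^η` factor. -/
lemma ewa_aux_prod {X ι : Type*} [DecidableEq ι] (τ η : ℝ) (hτ : 0 < τ) (hτ1 : τ ≤ 1)
    (hη : 0 < η) (Q : X → ℝ) (hlo : ∀ x, τ ≤ Q x) (hhi : ∀ x, Q x ≤ 1)
    (S : Finset ι) (z : ι) (a b : ι → X) (h : ∀ s ∈ S, s ≠ z → a s = b s) :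
    τ ^ η * ∏ s ∈ S, Q (a s) ^ η ≤ ∏ s ∈ S, Q (b s) ^ η := by
  have hQpos : ∀ x, (0:ℝ) < Q x := fun x => lt_of_lt_of_le hτ (hlo x)
  by_cases hz : z ∈ S
  · rw [← Finset.prod_erase_mul _ _ hz, ← Finset.prod_erase_mul _ _ hz]
    have heq : ∏ s ∈ S.erase z, Q (a s) ^ η = ∏ s ∈ S.erase z, Q (b s) ^ η :=
      Finset.prod_congr rfl fun s hs => by
        rw [h s (Finset.mem_of_mem_erase hs) (Finset.ne_of_mem_erase hs)]
    rw [heq]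
    have hP : (0:ℝ) ≤ ∏ s ∈ S.erase z, Q (b s) ^ η :=
      Finset.prod_nonneg fun s _ => Real.rpow_nonneg (hQpos _).le _
    have hkey : τ ^ η * Q (a z) ^ η ≤ Q (b z) ^ η := by
      rw [← Real.mul_rpow hτ.le (hQpos _).le]
      apply Real.rpow_le_rpow (mul_nonneg hτ.le (hQpos _).le) _ hη.le
      calc τ * Q (a z) ≤ τ * 1 := by nlinarith [hhi (a z)]
        _ ≤ Q (b z) := by simpa using hlo (b z)
    calc τ ^ η * ((∏ s ∈ S.erase z, Q (b s) ^ η) * Q (a z) ^ η)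
        = (∏ s ∈ S.erase z, Q (b s) ^ η) * (τ ^ η * Q (a z) ^ η) := by ring
      _ ≤ (∏ s ∈ S.erase z, Q (b s) ^ η) * Q (b z) ^ η := by
          exact mul_le_mul_of_nonneg_left hkey hP
  · have heq : ∏ s ∈ S, Q (a s) ^ η = ∏ s ∈ S, Q (b s) ^ η :=
      Finset.prod_congr rfl fun s hs => by
        rw [h s hs (fun hsz => hz (hsz ▸ hs))]
    rw [heq]
    have hP : (0:ℝ) ≤ ∏ s ∈ S, Q (b s) ^ η :=
      Finset.prod_nonneg fun s _ => Real.rpow_nonneg (hQpos _).le _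
    exact mul_le_of_le_one_left hP (Real.rpow_le_one hτ.le hτ1 hη.le)

/-- One-sided mixture stability. -/
lemma ewa_aux_pred {X : Type*} [Fintype X] (T : ℕ) (τ η : ℝ) (hτ : 0 < τ) (hτ1 : τ ≤ 1)
    (hη : 0 < η) (C : Finset (X → ℝ)) (hC : C.Nonempty)
    (hlo : ∀ Q ∈ C, ∀ x, τ ≤ Q x) (hhi : ∀ Q ∈ C, ∀ x, Q x ≤ 1)
    (z : Fin T) (a b : Fin T → X) (h : ∀ s : Fin T, s ≠ z → a s = b s)
    (t : Fin T) (y : X) :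
    τ ^ (2 * η) * ewaPred C η a t y ≤ ewaPred C η b t y := by
  classical
  set S := Finset.univ.filter (fun s : Fin T => s < t) with hS
  have hQpos : ∀ Q ∈ C, ∀ x, (0:ℝ) < Q x := fun Q hQ x => lt_of_lt_of_le hτ (hlo Q hQ x)
  set F : (X → ℝ) → ℝ := fun Q => ∏ s ∈ S, Q (a s) ^ η with hF
  set G : (X → ℝ) → ℝ := fun Q => ∏ s ∈ S, Q (b s) ^ η with hG
  have hFpos : ∀ Q ∈ C, 0 < F Q := fun Q hQ =>
    Finset.prod_pos fun s _ => Real.rpow_pos_of_pos (hQpos Q hQ _) _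
  have hGpos : ∀ Q ∈ C, 0 < G Q := fun Q hQ =>
    Finset.prod_pos fun s _ => Real.rpow_pos_of_pos (hQpos Q hQ _) _
  have hFG : ∀ Q ∈ C, τ ^ η * F Q ≤ G Q := fun Q hQ =>
    ewa_aux_prod τ η hτ hτ1 hη Q (hlo Q hQ) (hhi Q hQ) S z a b (fun s _ => h s)
  have hGF : ∀ Q ∈ C, τ ^ η * G Q ≤ F Q := fun Q hQ =>
    ewa_aux_prod τ η hτ hτ1 hη Q (hlo Q hQ) (hhi Q hQ) S z b a
      (fun s _ hs => (h s hs).symm)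
  set N := ∑ Q ∈ C, F Q * Q y with hN
  set D := ∑ Q ∈ C, F Q with hD
  set N' := ∑ Q ∈ C, G Q * Q y with hN'
  set D' := ∑ Q ∈ C, G Q with hD'
  have hNpos : 0 < N := Finset.sum_pos (fun Q hQ => mul_pos (hFpos Q hQ) (hQpos Q hQ y)) hC
  have hDpos : 0 < D := Finset.sum_pos (fun Q hQ => hFpos Q hQ) hC
  have hN'pos : 0 < N' := Finset.sum_pos (fun Q hQ => mul_pos (hGpos Q hQ) (hQpos Q hQ y)) hC
  have hD'pos : 0 < D' := Finset.sum_pos (fun Q hQ => hGpos Q hQ) hC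
  have h1 : τ ^ η * N ≤ N' := by
    rw [hN, hN', Finset.mul_sum]
    refine Finset.sum_le_sum fun Q hQ => ?_
    rw [← mul_assoc]
    exact mul_le_mul_of_nonneg_right (hFG Q hQ) (hQpos Q hQ y).le
  have h2 : τ ^ η * D' ≤ D := by
    rw [hD, hD', Finset.mul_sum]
    exact Finset.sum_le_sum fun Q hQ => hGF Q hQ
  have hEa : ewaPred C η a t y = N / D := rfl
  have hEb : ewaPred C η b t y = N' / D' := rfl
  rw [hEa, hEb, ← mul_div_assoc]
  rw [div_le_div_iff₀ hDpos hD'pos]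
  have h2η : τ ^ (2 * η) = τ ^ η * τ ^ η := by
    rw [← Real.rpow_add hτ]; ring_nf
  have hτη : (0:ℝ) ≤ τ ^ η := Real.rpow_nonneg hτ.le _
  calc τ ^ (2 * η) * N * D' = (τ ^ η * N) * (τ ^ η * D') := by rw [h2η]; ring
    _ ≤ N' * D := by
        apply mul_le_mul h1 h2 (by positivity) hN'pos.le

/-- bounded-differences stability of EWA.  If all experts have all
probabilities at least `τ` and the two sample sequences differ only in the
first sample, then each predicted mixture changes by at most a `τ^{±2η}`
multiplicative factor pointwise, and consequently the KL divergence from `P*`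
to the time-averaged mixture changes by at most `2η·log(1/τ)`. -/
theorem ewa_bounded_differences {X : Type*} [Fintype X]
    (T : ℕ) (hT : 0 < T) (τ η : ℝ) (hτ : 0 < τ) (hτ1 : τ ≤ 1) (hη : 0 < η)
    (C : Finset (X → ℝ)) (hC : C.Nonempty)
    (hCτ : ∀ P ∈ C, ∀ x, τ ≤ P x) (hCsum : ∀ P ∈ C, ∑ x, P x = 1)
    (Pstar : X → ℝ) (hPnonneg : ∀ x, 0 ≤ Pstar x) (hPsum : ∑ x, Pstar x = 1)
    (xs xs' : Fin T → X) (hdiff : ∀ t : Fin T, t ≠ ⟨0, hT⟩ → xs t = xs' t) :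
    (∀ (t : Fin T) (y : X),
        τ ^ (2 * η) ≤ ewaPred C η xs' t y / ewaPred C η xs t y ∧
        ewaPred C η xs' t y / ewaPred C η xs t y ≤ τ ^ (-(2 * η))) ∧
    |klDiv Pstar (fun y => (1 / (T : ℝ)) * ∑ t, ewaPred C η xs' t y) -
        klDiv Pstar (fun y => (1 / (T : ℝ)) * ∑ t, ewaPred C η xs t y)| ≤
      2 * η * Real.log (1 / τ) := by
  classical
  have hQpos : ∀ Q ∈ C, ∀ x, (0:ℝ) < Q x := fun Q hQ x => lt_of_lt_of_le hτ (hCτ Q hQ x)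
  have hhi : ∀ Q ∈ C, ∀ x, Q x ≤ 1 := by
    intro Q hQ x
    calc Q x ≤ ∑ x', Q x' :=
          Finset.single_le_sum (fun x' _ => (hQpos Q hQ x').le) (Finset.mem_univ x)
      _ = 1 := hCsum Q hQ
  -- positivity of predictions
  have hpos : ∀ (a : Fin T → X) (t : Fin T) (y : X), 0 < ewaPred C η a t y := by
    intro a t y
    apply div_pos
    · exact Finset.sum_pos (fun Q hQ => mul_pos
        (Finset.prod_pos fun s _ => Real.rpow_pos_of_pos (hQpos Q hQ _) _) (hQpos Q hQ y)) hC
    · exact Finset.sum_pos (fun Q hQ =>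
        Finset.prod_pos fun s _ => Real.rpow_pos_of_pos (hQpos Q hQ _) _) hC
  have h2ηpos : (0:ℝ) < τ ^ (2 * η) := Real.rpow_pos_of_pos hτ _
  have hone : τ ^ (2 * η) * τ ^ (-(2 * η)) = 1 := by
    rw [← Real.rpow_add hτ]; simp
  -- one-sided mixture bounds
  have hfwd : ∀ (t : Fin T) (y : X),
      τ ^ (2 * η) * ewaPred C η xs t y ≤ ewaPred C η xs' t y := fun t y =>
    ewa_aux_pred T τ η hτ hτ1 hη C hC hCτ hhi ⟨0, hT⟩ xs xs' hdiff t y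
  have hbwd : ∀ (t : Fin T) (y : X),
      τ ^ (2 * η) * ewaPred C η xs' t y ≤ ewaPred C η xs t y := fun t y =>
    ewa_aux_pred T τ η hτ hτ1 hη C hC hCτ hhi ⟨0, hT⟩ xs' xs
      (fun s hs => (hdiff s hs).symm) t y
  have hpt : ∀ (t : Fin T) (y : X),
      τ ^ (2 * η) ≤ ewaPred C η xs' t y / ewaPred C η xs t y ∧
      ewaPred C η xs' t y / ewaPred C η xs t y ≤ τ ^ (-(2 * η)) := by
    intro t y
    constructor
    · rw [le_div_iff₀ (hpos xs t y)]
      exact hfwd t y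
    · rw [div_le_iff₀ (hpos xs t y)]
      nlinarith [hbwd t y, hpos xs' t y, hpos xs t y]
  refine ⟨hpt, ?_⟩
  -- averaged mixtures
  set M : X → ℝ := fun y => (1 / (T : ℝ)) * ∑ t, ewaPred C η xs t y with hM
  set M' : X → ℝ := fun y => (1 / (T : ℝ)) * ∑ t, ewaPred C η xs' t y with hM'
  have hTpos : (0:ℝ) < (T : ℝ) := Nat.cast_pos.mpr hT
  have hMpos : ∀ y, 0 < M y := by
    intro y
    apply mul_pos (by positivity)
    exact Finset.sum_pos (fun t _ => hpos xs t y) (Finset.univ_nonempty_iff.mpr ⟨⟨0, hT⟩⟩)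
  have hM'pos : ∀ y, 0 < M' y := by
    intro y
    apply mul_pos (by positivity)
    exact Finset.sum_pos (fun t _ => hpos xs' t y) (Finset.univ_nonempty_iff.mpr ⟨⟨0, hT⟩⟩)
  have hMfwd : ∀ y, τ ^ (2 * η) * M y ≤ M' y := by
    intro y
    rw [hM, hM']
    simp only
    rw [← mul_assoc, mul_comm (τ ^ (2*η)) (1 / (T:ℝ)), mul_assoc, Finset.mul_sum]
    apply mul_le_mul_of_nonneg_left _ (by positivity)
    exact Finset.sum_le_sum fun t _ => hfwd t y
  have hMbwd : ∀ y, τ ^ (2 * η) * M' y ≤ M y := by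
    intro y
    rw [hM, hM']
    simp only
    rw [← mul_assoc, mul_comm (τ ^ (2*η)) (1 / (T:ℝ)), mul_assoc, Finset.mul_sum]
    apply mul_le_mul_of_nonneg_left _ (by positivity)
    exact Finset.sum_le_sum fun t _ => hbwd t y
  -- the KL difference
  have hdiffKL : klDiv Pstar M' - klDiv Pstar M = ∑ y, Pstar y * Real.log (M y / M' y) := by
    rw [klDiv, klDiv, ← Finset.sum_sub_distrib]
    refine Finset.sum_congr rfl fun y _ => ?_
    by_cases hp : Pstar y = 0
    · simp [hp]
    · rw [← mul_sub]
      congr 1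
      rw [Real.log_div hp (hM'pos y).ne', Real.log_div hp (hMpos y).ne',
        Real.log_div (hMpos y).ne' (hM'pos y).ne']
      ring
  have hB : ∀ y, |Real.log (M y / M' y)| ≤ 2 * η * Real.log (1 / τ) := by
    intro y
    have hlog1τ : Real.log (1 / τ) = - Real.log τ := by rw [one_div, Real.log_inv]
    rw [abs_le]
    constructor
    · have h1 : τ ^ (2 * η) ≤ M y / M' y := by
        rw [le_div_iff₀ (hM'pos y)]; exact hMbwd y
      have := Real.log_le_log (Real.rpow_pos_of_pos hτ _) h1
      rw [Real.log_rpow hτ] at this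
      rw [hlog1τ]; linarith
    · have h2 : M y / M' y ≤ τ ^ (-(2 * η)) := by
        rw [div_le_iff₀ (hM'pos y)]
        nlinarith [hMfwd y, hM'pos y, hMpos y]
      have := Real.log_le_log (div_pos (hMpos y) (hM'pos y)) h2
      rw [Real.log_rpow hτ] at this
      rw [hlog1τ]; linarith
  rw [hdiffKL]
  calc |∑ y, Pstar y * Real.log (M y / M' y)|
      ≤ ∑ y, |Pstar y * Real.log (M y / M' y)| := Finset.abs_sum_le_sum_abs _ _
    _ ≤ ∑ y, Pstar y * (2 * η * Real.log (1 / τ)) := by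
        refine Finset.sum_le_sum fun y _ => ?_
        rw [abs_mul, abs_of_nonneg (hPnonneg y)]
        exact mul_le_mul_of_nonneg_left (hB y) (hPnonneg y)
    _ = 2 * η * Real.log (1 / τ) := by
        rw [← Finset.sum_mul, hPsum, one_mul]
end
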